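/- arXiv:2312.16704 — 12 statements merged into one kernel-verified Lean document; each statement's English description precedes it below -/
import Mathlib

section
/- Let T be a left-continuous t-norm on [0,1] with residual implicator I, let R be a reflexive fuzzy relation on a finite nonempty set X (R(x,x) = 1 for all x), and let A be a fuzzy set on X. Then an element y ∈ X is consistent, i.e. T(R(x,y), A(y)) ≤ A(x) for all x ∈ X, if and only if min_{x∈X} I(R(x,y), A(x)) = A(y). -/
structure IsTNorm (T : ℝ → ℝ → ℝ) : Prop where
  maps_to : ∀ x ∈ Set.Icc (0:ℝ) 1, ∀ y ∈ Set.Icc (0:ℝ) 1, T x y ∈ Set.Icc (0:ℝ) 1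
  comm : ∀ x ∈ Set.Icc (0:ℝ) 1, ∀ y ∈ Set.Icc (0:ℝ) 1, T x y = T y x
  assoc : ∀ x ∈ Set.Icc (0:ℝ) 1, ∀ y ∈ Set.Icc (0:ℝ) 1, ∀ z ∈ Set.Icc (0:ℝ) 1,
      T (T x y) z = T x (T y z)
  mono : ∀ x₁ ∈ Set.Icc (0:ℝ) 1, ∀ x₂ ∈ Set.Icc (0:ℝ) 1, ∀ y₁ ∈ Set.Icc (0:ℝ) 1,
      ∀ y₂ ∈ Set.Icc (0:ℝ) 1, x₁ ≤ x₂ → y₁ ≤ y₂ → T x₁ y₁ ≤ T x₂ y₂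
  one_left : ∀ x ∈ Set.Icc (0:ℝ) 1, T 1 x = x

/-- `T` is left-continuous: it commutes with suprema of nonempty subsets of `[0,1]`
in each (equivalently, by commutativity, the second) argument. -/
def LeftContinuousTNorm (T : ℝ → ℝ → ℝ) : Prop :=
  ∀ x ∈ Set.Icc (0:ℝ) 1, ∀ S : Set ℝ, S.Nonempty → S ⊆ Set.Icc (0:ℝ) 1 →
    T x (sSup S) = sSup (T x '' S)

/-- The residual implicator of `T`: `I(x,y) = sup {λ ∈ [0,1] | T(x,λ) ≤ y}`. -/
noncomputable def resid (T : ℝ → ℝ → ℝ) (x y : ℝ) : ℝ :=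
  sSup {l | l ∈ Set.Icc (0:ℝ) 1 ∧ T x l ≤ y}


section Aux

variable {T : ℝ → ℝ → ℝ}

lemma T_zero_right (hT : IsTNorm T) {x : ℝ} (hx : x ∈ Set.Icc (0:ℝ) 1) :
    T x 0 = 0 := by
  have h0 : (0:ℝ) ∈ Set.Icc (0:ℝ) 1 := by constructor <;> norm_num
  have h1 : (1:ℝ) ∈ Set.Icc (0:ℝ) 1 := by constructor <;> norm_num
  have hle : T x 0 ≤ T 1 0 := hT.mono x hx 1 h1 0 h0 0 h0 hx.2 le_rfl
  have hge := (hT.maps_to x hx 0 h0).1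
  have := hT.one_left 0 h0
  linarith

lemma resid_set_props (hT : IsTNorm T) {x y : ℝ} (hx : x ∈ Set.Icc (0:ℝ) 1)
    (hy : y ∈ Set.Icc (0:ℝ) 1) :
    (0:ℝ) ∈ {l | l ∈ Set.Icc (0:ℝ) 1 ∧ T x l ≤ y} ∧
      BddAbove {l | l ∈ Set.Icc (0:ℝ) 1 ∧ T x l ≤ y} := by
  constructor
  · refine ⟨⟨le_rfl, by norm_num⟩, ?_⟩
    rw [T_zero_right hT hx]; exact hy.1
  · exact ⟨1, fun l hl => hl.1.2⟩

lemma resid_mem (hT : IsTNorm T) {x y : ℝ} (hx : x ∈ Set.Icc (0:ℝ) 1)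
    (hy : y ∈ Set.Icc (0:ℝ) 1) : resid T x y ∈ Set.Icc (0:ℝ) 1 := by
  obtain ⟨h0, hbdd⟩ := resid_set_props hT hx hy
  exact ⟨le_csSup hbdd h0, csSup_le ⟨0, h0⟩ fun l hl => hl.1.2⟩

lemma le_resid (hT : IsTNorm T) {x y l : ℝ} (hx : x ∈ Set.Icc (0:ℝ) 1)
    (hy : y ∈ Set.Icc (0:ℝ) 1) (hl : l ∈ Set.Icc (0:ℝ) 1) (h : T x l ≤ y) :
    l ≤ resid T x y :=
  le_csSup (resid_set_props hT hx hy).2 ⟨hl, h⟩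

lemma T_resid_le (hT : IsTNorm T) (hTlc : LeftContinuousTNorm T)
    {x y : ℝ} (hx : x ∈ Set.Icc (0:ℝ) 1) (hy : y ∈ Set.Icc (0:ℝ) 1) :
    T x (resid T x y) ≤ y := by
  obtain ⟨h0, hbdd⟩ := resid_set_props hT hx hy
  rw [resid, hTlc x hx _ ⟨0, h0⟩ (fun l hl => hl.1)]
  exact csSup_le (⟨_, ⟨0, h0, rfl⟩⟩) (by rintro _ ⟨l, hl, rfl⟩; exact hl.2)

lemma resid_one_le (hT : IsTNorm T) {y : ℝ} (hy : y ∈ Set.Icc (0:ℝ) 1) :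
    resid T 1 y ≤ y := by
  have h1 : (1:ℝ) ∈ Set.Icc (0:ℝ) 1 := by constructor <;> norm_num
  refine csSup_le ⟨0, (resid_set_props hT h1 hy).1⟩ fun l hl => ?_
  have := hT.one_left l hl.1
  linarith [hl.2]

end Aux

/-- for a left-continuous t-norm `T` with residual implicator `I = resid T`,
a reflexive fuzzy relation `R` and a fuzzy set `A` on a finite nonempty `X`,
an element `y` is consistent iff `min_{x} I(R(x,y), A(x)) = A(y)`. -/
theorem stmt0 {X : Type*} [Fintype X] [Nonempty X]
    (T : ℝ → ℝ → ℝ) (hT : IsTNorm T) (hTlc : LeftContinuousTNorm T)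
    (R : X → X → ℝ) (hRmem : ∀ x y, R x y ∈ Set.Icc (0:ℝ) 1) (hRrefl : ∀ x, R x x = 1)
    (A : X → ℝ) (hA : ∀ x, A x ∈ Set.Icc (0:ℝ) 1) (y : X) :
    (∀ x, T (R x y) (A y) ≤ A x) ↔
      Finset.univ.inf' Finset.univ_nonempty (fun x => resid T (R x y) (A x)) = A y := by
  have hAy := hA y
  constructor
  · intro h
    apply le_antisymm
    · calc Finset.univ.inf' Finset.univ_nonempty (fun x => resid T (R x y) (A x))
          ≤ resid T (R y y) (A y) := Finset.inf'_le _ (Finset.mem_univ y)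
        _ ≤ A y := by rw [hRrefl y]; exact resid_one_le hT hAy
    · apply Finset.le_inf'
      intro x _
      exact le_resid hT (hRmem x y) (hA x) hAy (h x)
  · intro h x
    have hle : A y ≤ resid T (R x y) (A x) := h ▸ Finset.inf'_le _ (Finset.mem_univ x)
    calc T (R x y) (A y) ≤ T (R x y) (resid T (R x y) (A x)) :=
          hT.mono _ (hRmem x y) _ (hRmem x y) _ hAy _ (resid_mem hT (hRmem x y) (hA x)) le_rfl hle
      _ ≤ A x := T_resid_le hT hTlc (hRmem x y) (hA x)
end

section
/- (Jensen's inequality for Choquet integrals, convex case.) Let X be a finite nonempty set, μ a monotone measure on X, f : X → [0,∞), and Φ : [0,∞) → [0,∞) a non-decreasing convex function. Then Φ(∫ f dμ) ≤ ∫ (Φ ∘ f) dμ, where both integrals are Choquet integrals w.r.t. μ. -/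
/-- A monotone measure on a finite set `X`. -/
structure IsMonotoneMeasure {X : Type*} (μ : Set X → ℝ) : Prop where
  empty : μ ∅ = 0
  univ : μ Set.univ = 1
  mono : ∀ E F : Set X, E ⊆ F → μ E ≤ μ F

/-- The Choquet integral of `f : X → ℝ` w.r.t. `μ` on the finite set `X`:
`∑ i, f(x*_i) · (μ(A*_i) − μ(A*_{i+1}))` where `x*` enumerates `X` with
`f(x*_1) ≤ … ≤ f(x*_n)` and `A*_i = {x*_i, …, x*_n}` (so `A*_{n+1} = ∅` and `μ ∅ = 0`). -/
noncomputable def choquet {X : Type*} [Fintype X] (μ : Set X → ℝ) (f : X → ℝ) : ℝ :=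
  let e : Fin (Fintype.card X) ≃ X := (Fintype.equivFin X).symm
  let σ : Equiv.Perm (Fin (Fintype.card X)) := Tuple.sort (f ∘ e)
  ∑ i : Fin (Fintype.card X),
    f (e (σ i)) * (μ {x | ∃ j, i ≤ j ∧ e (σ j) = x} - μ {x | ∃ j, i < j ∧ e (σ j) = x})


open Finset in
lemma abel_aux (n : ℕ) (c ν : ℕ → ℝ) (hν : ν n = 0) :
    ∑ k ∈ Finset.range n, c k * (ν k - ν (k+1))
      = ∑ k ∈ Finset.range n, (c k - if k = 0 then 0 else c (k-1)) * ν k := by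
  rcases Nat.eq_zero_or_pos n with h | h
  · simp [h]
  obtain ⟨m, rfl⟩ := Nat.exists_eq_add_of_lt h
  simp only [zero_add] at *
  have key : ∑ k ∈ Finset.range (m+1), c k * ν (k+1)
      = ∑ k ∈ Finset.range (m+1), (if k = 0 then 0 else c (k-1)) * ν k := by
    rw [Finset.sum_range_succ, hν, mul_zero, add_zero,
      Finset.sum_range_succ' (fun k => (if k = 0 then 0 else c (k-1)) * ν k) m]
    simp
  simp only [mul_sub, sub_mul, Finset.sum_sub_distrib, key]

lemma canon_aux {X : Type*} (n : ℕ) (μ : Set X → ℝ) (hempty : μ ∅ = 0)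
    (g : X → ℝ) (E : Fin n → X) (hE : Function.Surjective E)
    (hmono : Monotone (g ∘ E)) (c : ℕ → ℝ) (hc : ∀ i : Fin n, c i = g (E i)) :
    ∑ i : Fin n, g (E i) * (μ {x | ∃ j, i ≤ j ∧ E j = x} - μ {x | ∃ j, i < j ∧ E j = x})
      = ∑ k ∈ Finset.range n, (c k - if k = 0 then 0 else c (k-1)) *
          (if k = 0 then μ Set.univ else μ {x | c k ≤ g x}) := by
  set ν : ℕ → ℝ := fun k => μ {x | ∃ j : Fin n, k ≤ (j : ℕ) ∧ E j = x} with hνdef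
  have hcm : ∀ a b : Fin n, a ≤ b → c a ≤ c b := by
    intro a b h
    rw [hc, hc]; exact hmono h
  have step1 : ∑ i : Fin n, g (E i) *
      (μ {x | ∃ j, i ≤ j ∧ E j = x} - μ {x | ∃ j, i < j ∧ E j = x})
      = ∑ k ∈ Finset.range n, c k * (ν k - ν (k+1)) := by
    rw [← Fin.sum_univ_eq_sum_range (fun k => c k * (ν k - ν (k+1))) n]
    refine Finset.sum_congr rfl fun i _ => ?_
    have h1 : {x | ∃ j, i ≤ j ∧ E j = x} = {x | ∃ j : Fin n, (i : ℕ) ≤ (j : ℕ) ∧ E j = x} := by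
      ext x
      constructor
      · rintro ⟨j, hj, rfl⟩; exact ⟨j, Fin.le_def.mp hj, rfl⟩
      · rintro ⟨j, hj, rfl⟩; exact ⟨j, Fin.le_def.mpr hj, rfl⟩
    have h2 : {x | ∃ j, i < j ∧ E j = x} = {x | ∃ j : Fin n, (i : ℕ) + 1 ≤ (j : ℕ) ∧ E j = x} := by
      ext x
      constructor
      · rintro ⟨j, hj, rfl⟩; exact ⟨j, Fin.lt_def.mp hj, rfl⟩
      · rintro ⟨j, hj, rfl⟩; exact ⟨j, Fin.lt_def.mpr hj, rfl⟩
    rw [hc i, h1, h2]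
  have hνn : ν n = 0 := by
    have : {x | ∃ j : Fin n, n ≤ (j : ℕ) ∧ E j = x} = (∅ : Set X) := by
      ext x
      simp only [Set.mem_setOf_eq, Set.mem_empty_iff_false, iff_false]
      rintro ⟨j, hj, -⟩
      exact absurd hj (not_le.mpr j.isLt)
    simp only [hνdef, this, hempty]
  rw [step1, abel_aux n c ν hνn]
  refine Finset.sum_congr rfl fun k hk => ?_
  have hkn : k < n := Finset.mem_range.mp hk
  by_cases hk0 : k = 0
  · subst hk0
    have : {x | ∃ j : Fin n, 0 ≤ (j : ℕ) ∧ E j = x} = Set.univ := by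
      ext x
      simpa using hE x
    simp only [hνdef]
    rw [this]
    simp
  · simp only [if_neg hk0]
    by_cases hcc : c k = c (k-1)
    · rw [hcc, sub_self, zero_mul, zero_mul]
    · have hk1 : k - 1 < n := lt_of_le_of_lt (Nat.sub_le k 1) hkn
      have hlt : c (k-1) < c k := by
        refine lt_of_le_of_ne ?_ (Ne.symm hcc)
        have := hcm ⟨k-1, hk1⟩ ⟨k, hkn⟩ (by simp [Fin.le_def])
        simpa using this
      have hset : {x | ∃ j : Fin n, k ≤ (j : ℕ) ∧ E j = x} = {x | c k ≤ g x} := by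
        ext x
        simp only [Set.mem_setOf_eq]
        constructor
        · rintro ⟨j, hj, rfl⟩
          have := hcm ⟨k, hkn⟩ j (by simpa [Fin.le_def] using hj)
          rw [hc j] at this
          simpa using this
        · intro hx
          obtain ⟨j, rfl⟩ := hE x
          refine ⟨j, ?_, rfl⟩
          by_contra hjk
          push_neg at hjk
          have hj1 : (j : ℕ) ≤ k - 1 := Nat.le_sub_one_of_lt hjk
          have := hcm j ⟨k-1, hk1⟩ (by simpa [Fin.le_def] using hj1)
          rw [hc j] at this
          exact absurd (le_trans hx this) (not_le.mpr hlt)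
      simp only [hνdef]
      rw [hset]

/-- Jensen's inequality for Choquet integrals, convex case. -/
theorem stmt1 {X : Type*} [Fintype X] [Nonempty X]
    (μ : Set X → ℝ) (hμ : IsMonotoneMeasure μ)
    (f : X → ℝ) (hf : ∀ x, 0 ≤ f x)
    (Φ : ℝ → ℝ) (hΦnn : ∀ x : ℝ, 0 ≤ x → 0 ≤ Φ x)
    (hΦmono : ∀ x y : ℝ, 0 ≤ x → x ≤ y → Φ x ≤ Φ y)
    (hΦconv : ConvexOn ℝ (Set.Ici (0:ℝ)) Φ) :
    Φ (choquet μ f) ≤ choquet μ (fun x => Φ (f x)) := by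
  classical
  set n := Fintype.card X with hn
  set e : Fin n ≃ X := (Fintype.equivFin X).symm with he
  set g : X → ℝ := fun x => Φ (f x) with hg
  set σ : Equiv.Perm (Fin n) := Tuple.sort (f ∘ e) with hσ
  set τ : Equiv.Perm (Fin n) := Tuple.sort (g ∘ e) with hτ
  have hchof : choquet μ f = ∑ i : Fin n, f (e (σ i)) *
      (μ {x | ∃ j, i ≤ j ∧ e (σ j) = x} - μ {x | ∃ j, i < j ∧ e (σ j) = x}) := rfl
  have hchog : choquet μ g = ∑ i : Fin n, g (e (τ i)) *
      (μ {x | ∃ j, i ≤ j ∧ e (τ j) = x} - μ {x | ∃ j, i < j ∧ e (τ j) = x}) := rfl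
  have hfmono : Monotone ((f ∘ e) ∘ σ) := by rw [hσ]; exact Tuple.monotone_sort _
  have hgσ : Monotone ((g ∘ e) ∘ σ) := fun a b hab => hΦmono _ _ (hf _) (hfmono hab)
  have hgτ : Monotone ((g ∘ e) ∘ τ) := by rw [hτ]; exact Tuple.monotone_sort _
  have heqg : (g ∘ e) ∘ σ = (g ∘ e) ∘ τ := Tuple.unique_monotone hgσ hgτ
  have hsurjσ : Function.Surjective (fun j : Fin n => e (σ j)) :=
    fun x => ⟨σ⁻¹ (e.symm x), by simp⟩
  have hsurjτ : Function.Surjective (fun j : Fin n => e (τ j)) :=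
    fun x => ⟨τ⁻¹ (e.symm x), by simp⟩
  set w : Fin n → ℝ := fun i =>
    μ {x | ∃ j, i ≤ j ∧ e (σ j) = x} - μ {x | ∃ j, i < j ∧ e (σ j) = x} with hw
  have hw0 : ∀ i : Fin n, 0 ≤ w i := by
    intro i
    refine sub_nonneg.mpr (hμ.mono _ _ ?_)
    rintro x ⟨j, hj, rfl⟩
    exact ⟨j, le_of_lt hj, rfl⟩
  have hw1 : ∑ i : Fin n, w i = 1 := by
    set ν : ℕ → ℝ := fun k => μ {x | ∃ j : Fin n, k ≤ (j : ℕ) ∧ e (σ j) = x} with hνdef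
    have step : ∑ i : Fin n, w i = ∑ k ∈ Finset.range n, (ν k - ν (k+1)) := by
      rw [← Fin.sum_univ_eq_sum_range (fun k => ν k - ν (k+1)) n]
      refine Finset.sum_congr rfl fun i _ => ?_
      have h1 : {x | ∃ j, i ≤ j ∧ e (σ j) = x}
          = {x | ∃ j : Fin n, (i : ℕ) ≤ (j : ℕ) ∧ e (σ j) = x} := by
        ext x
        constructor
        · rintro ⟨j, hj, rfl⟩; exact ⟨j, Fin.le_def.mp hj, rfl⟩
        · rintro ⟨j, hj, rfl⟩; exact ⟨j, Fin.le_def.mpr hj, rfl⟩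
      have h2 : {x | ∃ j, i < j ∧ e (σ j) = x}
          = {x | ∃ j : Fin n, (i : ℕ) + 1 ≤ (j : ℕ) ∧ e (σ j) = x} := by
        ext x
        constructor
        · rintro ⟨j, hj, rfl⟩; exact ⟨j, Fin.lt_def.mp hj, rfl⟩
        · rintro ⟨j, hj, rfl⟩; exact ⟨j, Fin.lt_def.mpr hj, rfl⟩
      rw [hw]
      simp only [h1, h2, hνdef]
    rw [step, Finset.sum_range_sub' ν n]
    have h0 : {x | ∃ j : Fin n, 0 ≤ (j : ℕ) ∧ e (σ j) = x} = Set.univ := by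
      ext x
      simpa using hsurjσ x
    have hnn : {x | ∃ j : Fin n, n ≤ (j : ℕ) ∧ e (σ j) = x} = (∅ : Set X) := by
      ext x
      simp only [Set.mem_setOf_eq, Set.mem_empty_iff_false, iff_false]
      rintro ⟨j, hj, -⟩
      exact absurd hj (not_le.mpr j.isLt)
    simp only [hνdef, h0, hnn, hμ.univ, hμ.empty, sub_zero]
  have hw0' : ∀ i ∈ (Finset.univ : Finset (Fin n)), 0 ≤ w i := fun i _ => hw0 i
  have hmem : ∀ i ∈ (Finset.univ : Finset (Fin n)), f (e (σ i)) ∈ Set.Ici (0:ℝ) :=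
    fun i _ => hf _
  have hJ := hΦconv.map_sum_le (p := fun i => f (e (σ i))) hw0' hw1 hmem
  set c : ℕ → ℝ := fun k => if h : k < n then g (e (σ ⟨k, h⟩)) else 0 with hcdef
  have hcσ : ∀ i : Fin n, c i = g (e (σ i)) := fun i => by simp [hcdef]
  have hcτ : ∀ i : Fin n, c i = g (e (τ i)) := fun i => by
    rw [hcσ i]; exact congrFun heqg i
  have hcanσ := canon_aux n μ hμ.empty g (fun j => e (σ j)) hsurjσ hgσ c hcσ
  have hcanτ := canon_aux n μ hμ.empty g (fun j => e (τ j)) hsurjτ hgτ c hcτ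
  calc Φ (choquet μ f) = Φ (∑ i ∈ Finset.univ, w i • f (e (σ i))) := by
        rw [hchof]
        congr 1
        exact Finset.sum_congr rfl fun i _ => by rw [smul_eq_mul, mul_comm]
    _ ≤ ∑ i ∈ Finset.univ, w i • Φ (f (e (σ i))) := hJ
    _ = ∑ i : Fin n, g (e (σ i)) *
        (μ {x | ∃ j, i ≤ j ∧ e (σ j) = x} - μ {x | ∃ j, i < j ∧ e (σ j) = x}) :=
      Finset.sum_congr rfl fun i _ => by rw [smul_eq_mul, mul_comm]
    _ = ∑ k ∈ Finset.range n, (c k - if k = 0 then 0 else c (k-1)) *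
        (if k = 0 then μ Set.univ else μ {x | c k ≤ g x}) := hcanσ
    _ = ∑ i : Fin n, g (e (τ i)) *
        (μ {x | ∃ j, i ≤ j ∧ e (τ j) = x} - μ {x | ∃ j, i < j ∧ e (τ j) = x}) := hcanτ.symm
    _ = choquet μ g := hchog.symm
end

section
/- (Jensen's inequality for Choquet integrals, concave case.) Let X be a finite nonempty set, μ a monotone measure on X, f : X → [0,∞), and Φ : [0,∞) → [0,∞) a non-decreasing concave function. Then Φ(∫ f dμ) ≥ ∫ (Φ ∘ f) dμ, where both integrals are Choquet integrals w.r.t. μ. -/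
open Finset

namespace ChoquetAux

variable {X : Type*}

def chA {n : ℕ} (e : Fin n ≃ X) (τ : Equiv.Perm (Fin n)) (k : ℕ) : Set X :=
  {x | ∃ j : Fin n, k ≤ (j : ℕ) ∧ e (τ j) = x}

lemma chA_zero {n : ℕ} (e : Fin n ≃ X) (τ : Equiv.Perm (Fin n)) :
    chA e τ 0 = Set.univ := by
  ext x
  simp only [chA, Set.mem_setOf_eq, Set.mem_univ, iff_true]
  exact ⟨τ⁻¹ (e.symm x), Nat.zero_le _, by simp⟩

lemma chA_empty {n : ℕ} (e : Fin n ≃ X) (τ : Equiv.Perm (Fin n)) {k : ℕ} (h : n ≤ k) :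
    chA e τ k = ∅ := by
  ext x
  simp only [chA, Set.mem_setOf_eq, Set.mem_empty_iff_false, iff_false]
  rintro ⟨j, hj, -⟩
  have := j.isLt
  omega

lemma chA_anti {n : ℕ} (e : Fin n ≃ X) (τ : Equiv.Perm (Fin n)) {k l : ℕ} (h : k ≤ l) :
    chA e τ l ⊆ chA e τ k := by
  rintro x ⟨j, hj, rfl⟩
  exact ⟨j, le_trans h hj, rfl⟩

lemma abel (w a : ℕ → ℝ) : ∀ n : ℕ, 0 < n →
    ∑ k ∈ range n, w k * (a k - a (k + 1)) =
      (∑ k ∈ range n, (w k - if k = 0 then 0 else w (k - 1)) * a k) - w (n - 1) * a n := by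
  intro n hn
  induction n with
  | zero => omega
  | succ m ih =>
    rcases Nat.eq_zero_or_pos m with hm | hm
    · subst hm; simp; ring
    · rw [sum_range_succ, sum_range_succ, ih hm, if_neg hm.ne']
      simp only [Nat.add_sub_cancel]
      ring

/-- The sorted-values sequence of `g` along enumeration `e ∘ τ`, as a `ℕ`-indexed sequence. -/
noncomputable def chW {n : ℕ} (e : Fin n ≃ X) (τ : Equiv.Perm (Fin n)) (g : X → ℝ) (k : ℕ) : ℝ :=
  if h : k < n then g (e (τ ⟨k, h⟩)) else 0

/-- The canonical (enumeration independent) form of the Choquet sum. -/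
noncomputable def canonSum (n : ℕ) (μ : Set X → ℝ) (g : X → ℝ) (w : ℕ → ℝ) : ℝ :=
  ∑ k ∈ range n, (w k - if k = 0 then 0 else w (k - 1)) * μ {x | w k ≤ g x}

lemma canon {n : ℕ} (hn : 0 < n) (e : Fin n ≃ X) (μ : Set X → ℝ) (hμe : μ ∅ = 0)
    (g : X → ℝ) (τ : Equiv.Perm (Fin n)) (hτ : Monotone (g ∘ e ∘ τ)) :
    ∑ i : Fin n, g (e (τ i)) * (μ (chA e τ i.val) - μ (chA e τ (i.val + 1))) =
      canonSum n μ g (chW e τ g) := by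
  set w := chW e τ g with hwdef
  set a : ℕ → ℝ := fun k => μ (chA e τ k) with hadef
  have hw : ∀ i : Fin n, w i.val = g (e (τ i)) := by
    intro i
    simp [hwdef, chW, i.isLt]
  have hwm : ∀ k l : ℕ, k ≤ l → (hl : l < n) → w k ≤ w l := by
    intro k l hkl hl
    have hk : k < n := lt_of_le_of_lt hkl hl
    have := hτ (show (⟨k, hk⟩ : Fin n) ≤ ⟨l, hl⟩ from hkl)
    simpa [hwdef, chW, hk, hl] using this
  -- convert to a range sum
  have h1 : ∑ i : Fin n, g (e (τ i)) * (μ (chA e τ i.val) - μ (chA e τ (i.val + 1)))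
      = ∑ k ∈ range n, w k * (a k - a (k + 1)) := by
    rw [Finset.sum_range fun k => w k * (a k - a (k + 1))]
    refine Finset.sum_congr rfl fun i _ => ?_
    rw [hw i]
  rw [h1, abel w a n hn]
  have han : a n = 0 := by rw [hadef]; simp [chA_empty e τ le_rfl, hμe]
  rw [han, mul_zero, sub_zero]
  -- compare term by term
  refine Finset.sum_congr rfl fun k hk => ?_
  have hkn : k < n := mem_range.mp hk
  rcases Nat.eq_zero_or_pos k with rfl | hkpos
  · -- k = 0 : both sets are univ
    have : {x | w 0 ≤ g x} = Set.univ := by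
      ext x
      simp only [Set.mem_setOf_eq, Set.mem_univ, iff_true]
      obtain ⟨j, rfl⟩ : ∃ j : Fin n, e (τ j) = x := ⟨τ⁻¹ (e.symm x), by simp⟩
      rw [← hw j]
      exact hwm 0 j.val (Nat.zero_le _) j.isLt
    simp only [hadef]
    rw [chA_zero, this]
  · rcases eq_or_lt_of_le (hwm (k - 1) k (Nat.sub_le _ _) hkn) with heq | hlt
    · -- equal adjacent values: coefficient is zero
      rw [if_neg hkpos.ne', heq, sub_self, zero_mul, zero_mul]
    · -- strict increase: the tail set is the level set
      have hset : chA e τ k = {x | w k ≤ g x} := by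
        ext x
        simp only [chA, Set.mem_setOf_eq]
        constructor
        · rintro ⟨j, hj, rfl⟩
          rw [← hw j]
          exact hwm k j.val hj j.isLt
        · intro hx
          obtain ⟨j, rfl⟩ : ∃ j : Fin n, e (τ j) = x := ⟨τ⁻¹ (e.symm x), by simp⟩
          refine ⟨j, ?_, rfl⟩
          by_contra hjk
          push_neg at hjk
          have hjle : (j : ℕ) ≤ k - 1 := by omega
          have := hwm j.val (k - 1) hjle (by omega)
          rw [hw j] at this
          exact absurd (le_trans hx this) (not_le.mpr hlt)
      simp only [hadef]
      rw [hset]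


/-- Enumeration-independence: any monotone enumeration yields the same Choquet sum. -/
lemma indep {n : ℕ} (hn : 0 < n) (e : Fin n ≃ X) (μ : Set X → ℝ) (hμe : μ ∅ = 0)
    (g : X → ℝ) (σ τ : Equiv.Perm (Fin n))
    (hσ : Monotone (g ∘ e ∘ σ)) (hτ : Monotone (g ∘ e ∘ τ)) :
    ∑ i : Fin n, g (e (σ i)) * (μ (chA e σ i.val) - μ (chA e σ (i.val + 1))) =
      ∑ i : Fin n, g (e (τ i)) * (μ (chA e τ i.val) - μ (chA e τ (i.val + 1))) := by
  rw [canon hn e μ hμe g σ hσ, canon hn e μ hμe g τ hτ]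
  have hu : (g ∘ e) ∘ σ = (g ∘ e) ∘ τ := Tuple.unique_monotone hσ hτ
  have : chW e σ g = chW e τ g := by
    funext k
    by_cases h : k < n
    · simpa [chW, h] using congrFun hu ⟨k, h⟩
    · simp [chW, h]
  rw [this]

end ChoquetAux

open ChoquetAux in
lemma choquet_eq {X : Type*} [Fintype X] (μ : Set X → ℝ) (g : X → ℝ) :
    choquet μ g = ∑ i : Fin (Fintype.card X),
      g ((Fintype.equivFin X).symm (Tuple.sort (g ∘ (Fintype.equivFin X).symm) i)) *
        (μ (chA (Fintype.equivFin X).symm (Tuple.sort (g ∘ (Fintype.equivFin X).symm)) i.val) -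
         μ (chA (Fintype.equivFin X).symm (Tuple.sort (g ∘ (Fintype.equivFin X).symm)) (i.val + 1))) :=
  rfl

/-- Jensen's inequality for Choquet integrals, concave case. -/
theorem stmt2 {X : Type*} [Fintype X] [Nonempty X]
    (μ : Set X → ℝ) (hμ : IsMonotoneMeasure μ)
    (f : X → ℝ) (hf : ∀ x, 0 ≤ f x)
    (Φ : ℝ → ℝ) (hΦnn : ∀ x : ℝ, 0 ≤ x → 0 ≤ Φ x)
    (hΦmono : ∀ x y : ℝ, 0 ≤ x → x ≤ y → Φ x ≤ Φ y)
    (hΦconc : ConcaveOn ℝ (Set.Ici (0:ℝ)) Φ) :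
    choquet μ (fun x => Φ (f x)) ≤ Φ (choquet μ f) := by
  classical
  set n := Fintype.card X with hn
  have hnpos : 0 < n := Fintype.card_pos
  set e : Fin n ≃ X := (Fintype.equivFin X).symm with he
  set σ : Equiv.Perm (Fin n) := Tuple.sort (f ∘ e) with hσ
  set g : X → ℝ := fun x => Φ (f x) with hg
  set τ : Equiv.Perm (Fin n) := Tuple.sort (g ∘ e) with hτ
  have hσmono : Monotone (f ∘ e ∘ σ) := Tuple.monotone_sort (f ∘ e)
  have hτmono : Monotone (g ∘ e ∘ τ) := Tuple.monotone_sort (g ∘ e)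
  have hgσmono : Monotone (g ∘ e ∘ σ) := by
    intro i j hij
    exact hΦmono _ _ (hf _) (hσmono hij)
  set lam : Fin n → ℝ := fun i =>
    μ (ChoquetAux.chA e σ i.val) - μ (ChoquetAux.chA e σ (i.val + 1)) with hlam
  have h1 : choquet μ f = ∑ i : Fin n, f (e (σ i)) * lam i := choquet_eq μ f
  have h2 : choquet μ g = ∑ i : Fin n, g (e (σ i)) * lam i := by
    rw [choquet_eq μ g]
    exact ChoquetAux.indep hnpos e μ hμ.empty g τ σ hτmono hgσmono
  have hlamnn : ∀ i : Fin n, 0 ≤ lam i := by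
    intro i
    have := hμ.mono _ _ (ChoquetAux.chA_anti e σ (Nat.le_succ i.val))
    simp only [hlam]
    linarith
  have hlamsum : ∑ i : Fin n, lam i = 1 := by
    have := Finset.sum_range_sub' (fun k => μ (ChoquetAux.chA e σ k)) n
    rw [hlam]
    rw [← Finset.sum_range fun k =>
      μ (ChoquetAux.chA e σ k) - μ (ChoquetAux.chA e σ (k + 1))]
    rw [this, ChoquetAux.chA_zero, ChoquetAux.chA_empty e σ le_rfl, hμ.empty, hμ.univ, sub_zero]
  have hmem : ∀ i ∈ Finset.univ (α := Fin n), f (e (σ i)) ∈ Set.Ici (0 : ℝ) :=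
    fun i _ => hf _
  have jensen := hΦconc.le_map_sum (t := Finset.univ) (w := lam) (p := fun i => f (e (σ i)))
    (fun i _ => hlamnn i) hlamsum hmem
  simp only [smul_eq_mul] at jensen
  calc choquet μ g = ∑ i : Fin n, g (e (σ i)) * lam i := h2
    _ = ∑ i : Fin n, lam i * Φ (f (e (σ i))) := by
        refine Finset.sum_congr rfl fun i _ => ?_
        rw [hg, mul_comm]
    _ ≤ Φ (∑ i : Fin n, lam i * f (e (σ i))) := jensen
    _ = Φ (choquet μ f) := by
        rw [h1]
        congr 1
        exact Finset.sum_congr rfl fun i _ => mul_comm _ _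
end

section
/- Let T be a D-convex left-continuous t-norm, I its residual implicator, μ a monotone measure on a finite nonempty set X, and R a T-equivalence relation on X. For every fuzzy set A on X, the Choquet lower approximation L(y) = ∫ I(R(x,y), A(x)) dμ(x) is a fixed point of the classical lower approximation: min_{x∈X} I(R(x,y), L(x)) = L(y) for every y ∈ X. -/
/-- `T` is D-convex: convex in each argument separately on `[0,1]`. -/
def DConvex (T : ℝ → ℝ → ℝ) : Prop :=
  ∀ a ∈ Set.Icc (0:ℝ) 1, ∀ b ∈ Set.Icc (0:ℝ) 1, ∀ y ∈ Set.Icc (0:ℝ) 1, ∀ w ∈ Set.Icc (0:ℝ) 1,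
    T (w * a + (1 - w) * b) y ≤ w * T a y + (1 - w) * T b y ∧
    T y (w * a + (1 - w) * b) ≤ w * T y a + (1 - w) * T y b

/-- `R` is a `T`-equivalence relation: a `[0,1]`-valued reflexive, symmetric and
`T`-transitive fuzzy relation. -/
structure IsTEquiv {X : Type*} (T : ℝ → ℝ → ℝ) (R : X → X → ℝ) : Prop where
  mem : ∀ x y, R x y ∈ Set.Icc (0:ℝ) 1
  refl : ∀ x, R x x = 1
  symm : ∀ x y, R x y = R y x
  trans : ∀ x y z, T (R x y) (R y z) ≤ R x z

set_option linter.unusedSectionVars false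
set_option linter.unusedVariables false

namespace Stmt5Aux

open Finset

lemma min_diff_mono {x' x s' s : ℝ} (hx : x' ≤ x) (hs : s' ≤ s) :
    min x' s - min x' s' ≤ min x s - min x s' := by
  simp only [min_def]; split_ifs <;> linarith

lemma min_sub_min_le {x s' s : ℝ} (hs : s' ≤ s) :
    min x s - min x s' ≤ s - s' := by
  simp only [min_def]; split_ifs <;> linarith

lemma grid_le (n : ℕ) (Tt S : ℕ → ℝ) (G : ℝ → ℝ)
    (hT : Monotone Tt) (hS : Monotone S) (hT0 : Tt 0 = 0) (hS0 : S 0 = 0)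
    (hTS : Tt n ≤ S n) (hGa : Antitone G) (hG0 : ∀ r, 0 ≤ G r)
    (hflat : ∀ j < n, ∀ r, S j < r → r ≤ S (j + 1) → G r = G (S (j + 1))) :
    ∑ k ∈ range n, (Tt (k + 1) - Tt k) * G (Tt (k + 1))
      ≤ ∑ j ∈ range n, (S (j + 1) - S j) * G (S (j + 1)) := by
  set L : ℕ → ℕ → ℝ := fun k j =>
    (min (Tt (k + 1)) (S (j + 1)) - min (Tt (k + 1)) (S j))
      - (min (Tt k) (S (j + 1)) - min (Tt k) (S j)) with hL
  have hLnn : ∀ k j, 0 ≤ L k j := by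
    intro k j
    have := min_diff_mono (hT (Nat.le_succ k)) (hS (Nat.le_succ j)) (x' := Tt k) (x := Tt (k+1))
    simp only [hL]; linarith
  have hTnn : ∀ k, 0 ≤ Tt k := fun k => hT0 ▸ hT (Nat.zero_le k)
  have hSnn : ∀ j, 0 ≤ S j := fun j => hS0 ▸ hS (Nat.zero_le j)
  have hrow : ∀ k < n, ∑ j ∈ range n, L k j = Tt (k + 1) - Tt k := by
    intro k hk
    have h1 : ∑ j ∈ range n, (min (Tt (k+1)) (S (j+1)) - min (Tt (k+1)) (S j))
        = min (Tt (k+1)) (S n) - min (Tt (k+1)) (S 0) :=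
      Finset.sum_range_sub (fun j => min (Tt (k+1)) (S j)) n
    have h2 : ∑ j ∈ range n, (min (Tt k) (S (j+1)) - min (Tt k) (S j))
        = min (Tt k) (S n) - min (Tt k) (S 0) :=
      Finset.sum_range_sub (fun j => min (Tt k) (S j)) n
    have e1 : min (Tt (k+1)) (S n) = Tt (k+1) :=
      min_eq_left ((hT (Nat.succ_le_of_lt hk)).trans hTS)
    have e2 : min (Tt k) (S n) = Tt k :=
      min_eq_left ((hT (Nat.le_of_lt hk)).trans hTS)
    have e3 : min (Tt (k+1)) (S 0) = 0 := by rw [hS0]; exact min_eq_right (hTnn _)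
    have e4 : min (Tt k) (S 0) = 0 := by rw [hS0]; exact min_eq_right (hTnn _)
    calc ∑ j ∈ range n, L k j
        = ∑ j ∈ range n, (min (Tt (k+1)) (S (j+1)) - min (Tt (k+1)) (S j))
          - ∑ j ∈ range n, (min (Tt k) (S (j+1)) - min (Tt k) (S j)) := by
          rw [← Finset.sum_sub_distrib]
      _ = Tt (k + 1) - Tt k := by rw [h1, h2, e1, e2, e3, e4]; ring
  have hcol : ∀ j, ∑ k ∈ range n, L k j ≤ S (j + 1) - S j := by
    intro j
    have h1 : ∑ k ∈ range n, L k j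
        = (min (Tt n) (S (j+1)) - min (Tt n) (S j))
          - (min (Tt 0) (S (j+1)) - min (Tt 0) (S j)) :=
      Finset.sum_range_sub (fun k => min (Tt k) (S (j+1)) - min (Tt k) (S j)) n
    have e3 : min (Tt 0) (S (j+1)) = 0 := by rw [hT0]; exact min_eq_left (hSnn _)
    have e4 : min (Tt 0) (S j) = 0 := by rw [hT0]; exact min_eq_left (hSnn _)
    rw [h1, e3, e4]
    have := min_sub_min_le (x := Tt n) (hS (Nat.le_succ j))
    linarith
  have hkey : ∀ k, ∀ j < n, L k j * G (Tt (k + 1)) ≤ L k j * G (S (j + 1)) := by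
    intro k j hj
    rcases (hLnn k j).eq_or_lt with h | h
    · rw [← h]; simp
    · have h1 : S j < Tt (k + 1) := by
        by_contra hc; push_neg at hc
        have h2 : Tt k ≤ S j := (hT (Nat.le_succ k)).trans hc
        have h3 : Tt (k+1) ≤ S (j+1) := hc.trans (hS (Nat.le_succ j))
        have h4 : Tt k ≤ S (j+1) := h2.trans (hS (Nat.le_succ j))
        simp only [hL, min_eq_left hc, min_eq_left h2, min_eq_left h3, min_eq_left h4] at h
        linarith
      have h2 : Tt k < S (j + 1) := by
        by_contra hc; push_neg at hc
        have h2 : S (j+1) ≤ Tt (k+1) := hc.trans (hT (Nat.le_succ k))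
        have h3 : S j ≤ Tt k := (hS (Nat.le_succ j)).trans hc
        have h4 : S j ≤ Tt (k+1) := h3.trans (hT (Nat.le_succ k))
        simp only [hL, min_eq_right hc, min_eq_right h2, min_eq_right h3, min_eq_right h4] at h
        linarith
      have h3 : S j < S (j + 1) := by
        rcases (hS (Nat.le_succ j)).eq_or_lt with h' | h'
        · exfalso; simp only [hL, ← h'] at h; linarith
        · exact h'
      have hr1 : S j < min (Tt (k+1)) (S (j+1)) := lt_min h1 h3
      have hr2 : min (Tt (k+1)) (S (j+1)) ≤ S (j+1) := min_le_right _ _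
      have hflat' : G (min (Tt (k+1)) (S (j+1))) = G (S (j+1)) := hflat j hj _ hr1 hr2
      have : G (Tt (k+1)) ≤ G (S (j+1)) := by
        rw [← hflat']; exact hGa (min_le_left _ _)
      exact mul_le_mul_of_nonneg_left this (le_of_lt h)
  calc ∑ k ∈ range n, (Tt (k + 1) - Tt k) * G (Tt (k + 1))
      = ∑ k ∈ range n, ∑ j ∈ range n, L k j * G (Tt (k + 1)) := by
        refine Finset.sum_congr rfl fun k hk => ?_
        rw [← Finset.sum_mul, hrow k (Finset.mem_range.mp hk)]
    _ ≤ ∑ k ∈ range n, ∑ j ∈ range n, L k j * G (S (j + 1)) := by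
        refine Finset.sum_le_sum fun k _ => Finset.sum_le_sum fun j hj => ?_
        exact hkey k j (Finset.mem_range.mp hj)
    _ = ∑ j ∈ range n, (∑ k ∈ range n, L k j) * G (S (j + 1)) := by
        rw [Finset.sum_comm]
        exact Finset.sum_congr rfl fun j _ => (Finset.sum_mul _ _ _).symm
    _ ≤ ∑ j ∈ range n, (S (j + 1) - S j) * G (S (j + 1)) :=
        Finset.sum_le_sum fun j _ => mul_le_mul_of_nonneg_right (hcol j) (hG0 _)

lemma abel_sum (a W : ℕ → ℝ) (n : ℕ) (ha0 : a 0 = 0) (hWn : W n = 0) :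
    ∑ k ∈ range n, a (k + 1) * (W k - W (k + 1))
      = ∑ k ∈ range n, (a (k + 1) - a k) * W k := by
  have h := Finset.sum_range_sub (fun k => a k * W k) n
  have h2 : ∑ k ∈ range n, ((a (k+1) - a k) * W k - a (k+1) * (W k - W (k+1)))
      = ∑ k ∈ range n, (a (k+1) * W (k+1) - a k * W k) :=
    Finset.sum_congr rfl fun k _ => by ring
  rw [Finset.sum_sub_distrib] at h2
  rw [h] at h2
  rw [ha0, hWn] at h2
  linarith


variable {X : Type*} [Fintype X]

/-- upper set of an enumeration -/
def upSet {n : ℕ} (v : Fin n → X) (k : ℕ) : Set X :=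
  {x | ∃ j : Fin n, k ≤ (j : ℕ) ∧ v j = x}

/-- padded value sequence -/
noncomputable def tval {n : ℕ} (f : X → ℝ) (v : Fin n → X) : ℕ → ℝ := fun k =>
  if hk : k < n then f (v ⟨k, hk⟩)
  else if hn : 0 < n then f (v ⟨n - 1, by omega⟩) else 0

/-- shifted value sequence -/
noncomputable def TT {n : ℕ} (f : X → ℝ) (v : Fin n → X) : ℕ → ℝ := fun k =>
  match k with
  | 0 => 0
  | j + 1 => tval f v j

lemma tval_of_lt {n : ℕ} (f : X → ℝ) (v : Fin n → X) {k : ℕ} (hk : k < n) :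
    tval f v k = f (v ⟨k, hk⟩) := dif_pos hk

lemma tval_comp {n : ℕ} (h : ℝ → ℝ) (h0 : h 0 = 0) (f : X → ℝ) (v : Fin n → X) (k : ℕ) :
    tval (fun x => h (f x)) v k = h (tval f v k) := by
  unfold tval; split_ifs <;> simp [h0]

lemma tval_mono {n : ℕ} {f : X → ℝ} {v : Fin n → X} (hm : Monotone (f ∘ v)) :
    Monotone (tval f v) := by
  intro k k' hkk
  unfold tval
  by_cases h1 : k < n
  · by_cases h2 : k' < n
    · simp only [dif_pos h1, dif_pos h2]
      exact hm (Fin.mk_le_mk.mpr hkk)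
    · have hn : 0 < n := by omega
      simp only [dif_neg h2, dif_pos h1, dif_pos hn]
      exact hm (Fin.mk_le_mk.mpr (by omega))
  · have h2 : ¬ k' < n := by omega
    simp only [dif_neg h1, dif_neg h2]
    exact le_rfl

lemma TT_mono {n : ℕ} {f : X → ℝ} {v : Fin n → X} (hm : Monotone (f ∘ v))
    (hf0 : ∀ x, 0 ≤ f x) : Monotone (TT f v) := by
  apply monotone_nat_of_le_succ
  intro k
  cases k with
  | zero =>
    show (0:ℝ) ≤ tval f v 0
    unfold tval
    split_ifs <;> first | exact hf0 _ | exact le_rfl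
  | succ j => exact tval_mono hm (Nat.le_succ j)

lemma upSet_anti {n : ℕ} (v : Fin n → X) {k k' : ℕ} (h : k ≤ k') :
    upSet v k' ⊆ upSet v k := fun x ⟨j, hj, hjx⟩ => ⟨j, h.trans hj, hjx⟩

lemma upSet_zero {n : ℕ} {v : Fin n → X} (hv : Function.Surjective v) :
    upSet v 0 = Set.univ := by
  ext x; simp only [upSet, Set.mem_setOf_eq, Set.mem_univ, iff_true]
  obtain ⟨j, hj⟩ := hv x
  exact ⟨j, Nat.zero_le _, hj⟩

lemma upSet_self {n : ℕ} (v : Fin n → X) : upSet v n = ∅ := by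
  ext x; simp only [upSet, Set.mem_setOf_eq, Set.mem_empty_iff_false, iff_false]
  rintro ⟨j, hj, -⟩
  exact absurd hj (by omega)


lemma mm_nonneg {μ : Set X → ℝ} (hμ : IsMonotoneMeasure μ) (E : Set X) : 0 ≤ μ E := by
  have := hμ.mono ∅ E (Set.empty_subset E); rw [hμ.empty] at this; exact this

lemma wgt_nonneg {μ : Set X → ℝ} (hμ : IsMonotoneMeasure μ) {n : ℕ} (v : Fin n → X) (k : ℕ) :
    0 ≤ μ (upSet v k) - μ (upSet v (k + 1)) :=
  sub_nonneg.mpr (hμ.mono _ _ (upSet_anti v (Nat.le_succ k)))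

lemma sum_wgt {μ : Set X → ℝ} (hμ : IsMonotoneMeasure μ) {n : ℕ} {v : Fin n → X}
    (hv : Function.Surjective v) :
    ∑ k ∈ range n, (μ (upSet v k) - μ (upSet v (k + 1))) = 1 := by
  rw [Finset.sum_range_sub' (fun k => μ (upSet v k)) n, upSet_zero hv, upSet_self,
    hμ.univ, hμ.empty]
  ring

lemma csum_le_csum {μ : Set X → ℝ} (hμ : IsMonotoneMeasure μ) {n : ℕ}
    (v w : Fin n → X) (hv : Function.Surjective v) (hw : Function.Surjective w)
    {f g : X → ℝ} (hf0 : ∀ x, 0 ≤ f x) (hfg : ∀ x, f x ≤ g x)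
    (hfm : Monotone (f ∘ v)) (hgm : Monotone (g ∘ w)) :
    ∑ k ∈ range n, tval f v k * (μ (upSet v k) - μ (upSet v (k + 1)))
      ≤ ∑ k ∈ range n, tval g w k * (μ (upSet w k) - μ (upSet w (k + 1))) := by
  rcases Nat.eq_zero_or_pos n with hn | hn
  · subst hn; simp
  have hg0 : ∀ x, 0 ≤ g x := fun x => (hf0 x).trans (hfg x)
  set G : ℝ → ℝ := fun r => μ {x | r ≤ g x} with hG
  have hGa : Antitone G := fun r r' h =>
    hμ.mono {x | r' ≤ g x} {x | r ≤ g x} (fun x hx => h.trans hx)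
  have htv : ∀ (h : X → ℝ) (u : Fin n → X) (j : Fin n), tval h u ↑j = h (u j) := by
    intro h u j; rw [tval_of_lt h u j.isLt]
  have hWn : ∀ u : Fin n → X, μ (upSet u n) = 0 := by
    intro u; rw [upSet_self, hμ.empty]
  have habl : ∑ k ∈ range n, tval f v k * (μ (upSet v k) - μ (upSet v (k + 1)))
      = ∑ k ∈ range n, (TT f v (k + 1) - TT f v k) * μ (upSet v k) :=
    abel_sum (TT f v) (fun k => μ (upSet v k)) n rfl (hWn v)
  have habr : ∑ k ∈ range n, tval g w k * (μ (upSet w k) - μ (upSet w (k + 1)))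
      = ∑ k ∈ range n, (TT g w (k + 1) - TT g w k) * μ (upSet w k) :=
    abel_sum (TT g w) (fun k => μ (upSet w k)) n rfl (hWn w)
  have hlb : ∀ k < n, (TT f v (k + 1) - TT f v k) * μ (upSet v k)
      ≤ (TT f v (k + 1) - TT f v k) * G (TT f v (k + 1)) := by
    intro k hk
    refine mul_le_mul_of_nonneg_left ?_ (sub_nonneg.mpr (TT_mono hfm hf0 (Nat.le_succ k)))
    refine hμ.mono _ _ ?_
    rintro x ⟨j, hj, rfl⟩
    show TT f v (k + 1) ≤ g (v j)
    calc TT f v (k + 1) = tval f v k := rfl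
      _ ≤ tval f v ↑j := tval_mono hfm hj
      _ = f (v j) := htv f v j
      _ ≤ g (v j) := hfg _
  have hTS : TT f v n ≤ TT g w n := by
    obtain ⟨m, rfl⟩ : ∃ m, n = m + 1 := ⟨n - 1, by omega⟩
    have hm : m < m + 1 := Nat.lt_succ_self m
    obtain ⟨j, hj⟩ := hw (v ⟨m, hm⟩)
    calc TT f v (m + 1) = tval f v m := rfl
      _ = f (v ⟨m, hm⟩) := tval_of_lt f v hm
      _ ≤ g (v ⟨m, hm⟩) := hfg _
      _ = g (w j) := by rw [hj]
      _ = tval g w ↑j := (htv g w j).symm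
      _ ≤ tval g w m := tval_mono hgm (by omega)
      _ = TT g w (m + 1) := rfl
  have hflat : ∀ j < n, ∀ r, TT g w j < r → r ≤ TT g w (j + 1) → G r = G (TT g w (j + 1)) := by
    intro j hj r h1 h2
    have hset : {x | r ≤ g x} = {x | TT g w (j + 1) ≤ g x} := by
      apply Set.Subset.antisymm
      · intro x hx
        obtain ⟨k, rfl⟩ := hw x
        show TT g w (j + 1) ≤ g (w k)
        have hjk : j ≤ (k : ℕ) := by
          by_contra hc; push_neg at hc
          have hle : tval g w ↑k ≤ TT g w j := by
            cases j with
            | zero => omega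
            | succ i => exact tval_mono hgm (by omega)
          rw [htv g w k] at hle
          have hrx : r ≤ g (w k) := hx
          linarith
        calc TT g w (j + 1) = tval g w j := rfl
          _ ≤ tval g w ↑k := tval_mono hgm hjk
          _ = g (w k) := htv g w k
      · intro x hx; exact h2.trans hx
    show μ {x | r ≤ g x} = μ {x | TT g w (j + 1) ≤ g x}
    rw [hset]
  have hrb : ∀ j < n, (TT g w (j + 1) - TT g w j) * μ (upSet w j)
      = (TT g w (j + 1) - TT g w j) * G (TT g w (j + 1)) := by
    intro j hj
    rcases eq_or_lt_of_le (TT_mono hgm hg0 (Nat.le_succ j)) with h | h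
    · rw [← h]; ring
    · congr 1
      have hset : upSet w j = {x | TT g w (j + 1) ≤ g x} := by
        apply Set.Subset.antisymm
        · rintro x ⟨k, hk, rfl⟩
          show TT g w (j + 1) ≤ g (w k)
          calc TT g w (j + 1) = tval g w j := rfl
            _ ≤ tval g w ↑k := tval_mono hgm hk
            _ = g (w k) := htv g w k
        · intro x hx
          obtain ⟨k, rfl⟩ := hw x
          refine ⟨k, ?_, rfl⟩
          by_contra hc; push_neg at hc
          have hle : tval g w ↑k ≤ TT g w j := by
            cases j with
            | zero => omega
            | succ i => exact tval_mono hgm (by omega)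
          rw [htv g w k] at hle
          have hgx : TT g w (j + 1) ≤ g (w k) := hx
          linarith
      show μ (upSet w j) = μ {x | TT g w (j + 1) ≤ g x}
      rw [hset]
  calc ∑ k ∈ range n, tval f v k * (μ (upSet v k) - μ (upSet v (k + 1)))
      = ∑ k ∈ range n, (TT f v (k + 1) - TT f v k) * μ (upSet v k) := habl
    _ ≤ ∑ k ∈ range n, (TT f v (k + 1) - TT f v k) * G (TT f v (k + 1)) :=
        Finset.sum_le_sum fun k hk => hlb k (Finset.mem_range.mp hk)
    _ ≤ ∑ j ∈ range n, (TT g w (j + 1) - TT g w j) * G (TT g w (j + 1)) :=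
        grid_le n (TT f v) (TT g w) G (TT_mono hfm hf0) (TT_mono hgm hg0) rfl rfl hTS hGa
          (fun r => mm_nonneg hμ _) hflat
    _ = ∑ j ∈ range n, (TT g w (j + 1) - TT g w j) * μ (upSet w j) :=
        Finset.sum_congr rfl fun j hj => (hrb j (Finset.mem_range.mp hj)).symm
    _ = ∑ k ∈ range n, tval g w k * (μ (upSet w k) - μ (upSet w (k + 1))) := habr.symm


noncomputable def sortEnum (f : X → ℝ) : Fin (Fintype.card X) → X :=
  fun i => (Fintype.equivFin X).symm (Tuple.sort (f ∘ ⇑(Fintype.equivFin X).symm) i)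

lemma sortEnum_surj (f : X → ℝ) : Function.Surjective (sortEnum f) := fun x =>
  ⟨(Tuple.sort (f ∘ ⇑(Fintype.equivFin X).symm))⁻¹ ((Fintype.equivFin X) x), by
    simp [sortEnum]⟩

lemma sortEnum_mono (f : X → ℝ) : Monotone (f ∘ sortEnum f) :=
  Tuple.monotone_sort (f ∘ ⇑(Fintype.equivFin X).symm)

lemma choquet_eq (μ : Set X → ℝ) (f : X → ℝ) :
    choquet μ f = ∑ k ∈ range (Fintype.card X),
      tval f (sortEnum f) k
        * (μ (upSet (sortEnum f) k) - μ (upSet (sortEnum f) (k + 1))) := by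
  rw [choquet]
  rw [← Fin.sum_univ_eq_sum_range (fun k => tval f (sortEnum f) k
    * (μ (upSet (sortEnum f) k) - μ (upSet (sortEnum f) (k + 1)))) (Fintype.card X)]
  refine Finset.sum_congr rfl fun i _ => ?_
  have h1 : tval f (sortEnum f) ↑i = f (sortEnum f i) := by
    rw [tval_of_lt f _ i.isLt]
  have h2 : {x | ∃ j, i ≤ j ∧ (Fintype.equivFin X).symm
        ((Tuple.sort (f ∘ ⇑(Fintype.equivFin X).symm)) j) = x}
      = upSet (sortEnum f) ↑i := by
    ext x
    simp only [upSet, sortEnum, Set.mem_setOf_eq, Fin.le_def]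
  have h3 : {x | ∃ j, i < j ∧ (Fintype.equivFin X).symm
        ((Tuple.sort (f ∘ ⇑(Fintype.equivFin X).symm)) j) = x}
      = upSet (sortEnum f) (↑i + 1) := by
    ext x
    simp only [upSet, sortEnum, Set.mem_setOf_eq, Fin.lt_def, Nat.add_one_le_iff]
  rw [h1, h2, h3]
  rfl



lemma tval_nonneg {n : ℕ} {f : X → ℝ} (hf : ∀ x, 0 ≤ f x) (v : Fin n → X) (k : ℕ) :
    0 ≤ tval f v k := by
  unfold tval; split_ifs <;> first | exact hf _ | exact le_rfl

lemma tval_le_one {n : ℕ} {f : X → ℝ} (hf : ∀ x, f x ≤ 1) (v : Fin n → X) (k : ℕ) :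
    tval f v k ≤ 1 := by
  unfold tval; split_ifs <;> first | exact hf _ | norm_num

lemma choquet_mem_Icc {μ : Set X → ℝ} (hμ : IsMonotoneMeasure μ) {f : X → ℝ}
    (hf : ∀ x, f x ∈ Set.Icc (0:ℝ) 1) : choquet μ f ∈ Set.Icc (0:ℝ) 1 := by
  rw [choquet_eq]
  constructor
  · refine Finset.sum_nonneg fun k _ => mul_nonneg ?_ (wgt_nonneg hμ _ k)
    exact tval_nonneg (fun x => (hf x).1) _ k
  · calc ∑ k ∈ range (Fintype.card X), tval f (sortEnum f) k
          * (μ (upSet (sortEnum f) k) - μ (upSet (sortEnum f) (k + 1)))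
        ≤ ∑ k ∈ range (Fintype.card X),
            (μ (upSet (sortEnum f) k) - μ (upSet (sortEnum f) (k + 1))) := by
          refine Finset.sum_le_sum fun k _ => ?_
          have := mul_le_mul_of_nonneg_right (tval_le_one (fun x => (hf x).2) (sortEnum f) k)
            (wgt_nonneg hμ (sortEnum f) k)
          linarith
      _ = 1 := sum_wgt hμ (sortEnum_surj f)

lemma T_zero_right {T : ℝ → ℝ → ℝ} (hT : IsTNorm T) {x : ℝ} (hx : x ∈ Set.Icc (0:ℝ) 1) :
    T x 0 = 0 := by
  have h01 : (0:ℝ) ∈ Set.Icc (0:ℝ) 1 := ⟨le_rfl, zero_le_one⟩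
  have h11 : (1:ℝ) ∈ Set.Icc (0:ℝ) 1 := ⟨zero_le_one, le_rfl⟩
  have h1 : T x 0 ≤ T 1 0 := hT.mono x hx 1 h11 0 h01 0 h01 hx.2 le_rfl
  rw [hT.one_left 0 h01] at h1
  exact le_antisymm h1 (hT.maps_to x hx 0 h01).1

lemma convexOn_T {T : ℝ → ℝ → ℝ} (hTconv : DConvex T) {a : ℝ} (ha : a ∈ Set.Icc (0:ℝ) 1) :
    ConvexOn ℝ (Set.Icc (0:ℝ) 1) (fun t => T a t) := by
  refine ⟨convex_Icc 0 1, ?_⟩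
  intro x hx y hy p q hp hq hpq
  have hqp : q = 1 - p := by linarith
  have h := (hTconv x hx y hy a ha p ⟨hp, by linarith⟩).2
  simp only [smul_eq_mul, hqp]
  exact h

lemma key {T : ℝ → ℝ → ℝ} (hT : IsTNorm T) (hTconv : DConvex T)
    {μ : Set X → ℝ} (hμ : IsMonotoneMeasure μ)
    {a : ℝ} (ha : a ∈ Set.Icc (0:ℝ) 1)
    {f g : X → ℝ} (hf : ∀ x, f x ∈ Set.Icc (0:ℝ) 1) (hg : ∀ x, g x ∈ Set.Icc (0:ℝ) 1)
    (hfg : ∀ x, T a (f x) ≤ g x) :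
    T a (choquet μ f) ≤ choquet μ g := by
  set n := Fintype.card X with hn
  set v := sortEnum f with hv
  set w := sortEnum g with hw
  set g' : X → ℝ := fun x => T a (f x) with hg'
  have hg'mem : ∀ x, g' x ∈ Set.Icc (0:ℝ) 1 := fun x => hT.maps_to a ha (f x) (hf x)
  have hT0 : T a 0 = 0 := T_zero_right hT ha
  have hs1 : choquet μ f
      = ∑ k ∈ range n, (μ (upSet v k) - μ (upSet v (k + 1))) • tval f v k := by
    rw [choquet_eq]
    exact Finset.sum_congr rfl fun k _ => by rw [smul_eq_mul]; ring
  have hjen : T a (choquet μ f)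
      ≤ ∑ k ∈ range n, (μ (upSet v k) - μ (upSet v (k + 1))) • T a (tval f v k) := by
    rw [hs1]
    exact (convexOn_T hTconv ha).map_sum_le (fun k _ => wgt_nonneg hμ v k)
      (sum_wgt hμ (sortEnum_surj f))
      (fun k _ => ⟨tval_nonneg (fun x => (hf x).1) v k, tval_le_one (fun x => (hf x).2) v k⟩)
  have hmid : ∑ k ∈ range n, (μ (upSet v k) - μ (upSet v (k + 1))) • T a (tval f v k)
      = ∑ k ∈ range n, tval g' v k * (μ (upSet v k) - μ (upSet v (k + 1))) := by
    refine Finset.sum_congr rfl fun k _ => ?_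
    rw [tval_comp (fun t => T a t) hT0 f v k, smul_eq_mul]; ring
  have hmaster : ∑ k ∈ range n, tval g' v k * (μ (upSet v k) - μ (upSet v (k + 1)))
      ≤ ∑ k ∈ range n, tval g w k * (μ (upSet w k) - μ (upSet w (k + 1))) := by
    refine csum_le_csum hμ v w (sortEnum_surj f) (sortEnum_surj g)
      (fun x => (hg'mem x).1) hfg ?_ (sortEnum_mono g)
    intro i j hij
    exact hT.mono a ha a ha (f (v i)) (hf _) (f (v j)) (hf _) le_rfl (sortEnum_mono f hij)
  rw [choquet_eq μ g]
  calc T a (choquet μ f) ≤ _ := hjen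
    _ = _ := hmid
    _ ≤ _ := hmaster

lemma residSet_nonempty {T : ℝ → ℝ → ℝ} (hT : IsTNorm T) {x y : ℝ}
    (hx : x ∈ Set.Icc (0:ℝ) 1) (hy : 0 ≤ y) :
    {l | l ∈ Set.Icc (0:ℝ) 1 ∧ T x l ≤ y}.Nonempty :=
  ⟨0, ⟨le_rfl, zero_le_one⟩, by rw [T_zero_right hT hx]; exact hy⟩

lemma residSet_bdd {T : ℝ → ℝ → ℝ} {x y : ℝ} :
    BddAbove {l | l ∈ Set.Icc (0:ℝ) 1 ∧ T x l ≤ y} :=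
  ⟨1, fun l hl => hl.1.2⟩

lemma resid_mem {T : ℝ → ℝ → ℝ} (hT : IsTNorm T) {x y : ℝ}
    (hx : x ∈ Set.Icc (0:ℝ) 1) (hy : 0 ≤ y) : resid T x y ∈ Set.Icc (0:ℝ) 1 := by
  constructor
  · have h0 : (0:ℝ) ∈ {l | l ∈ Set.Icc (0:ℝ) 1 ∧ T x l ≤ y} :=
      ⟨⟨le_rfl, zero_le_one⟩, by rw [T_zero_right hT hx]; exact hy⟩
    exact le_csSup residSet_bdd h0
  · exact csSup_le (residSet_nonempty hT hx hy) fun l hl => hl.1.2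

lemma T_resid_le {T : ℝ → ℝ → ℝ} (hT : IsTNorm T) (hTlc : LeftContinuousTNorm T) {x y : ℝ}
    (hx : x ∈ Set.Icc (0:ℝ) 1) (hy : 0 ≤ y) : T x (resid T x y) ≤ y := by
  unfold resid
  rw [hTlc x hx _ (residSet_nonempty hT hx hy) (fun l hl => hl.1)]
  refine csSup_le ((residSet_nonempty hT hx hy).image _) ?_
  rintro _ ⟨l, hl, rfl⟩
  exact hl.2

lemma le_resid_iff {T : ℝ → ℝ → ℝ} (hT : IsTNorm T) (hTlc : LeftContinuousTNorm T)
    {x y c : ℝ} (hx : x ∈ Set.Icc (0:ℝ) 1) (hy : 0 ≤ y) (hc : c ∈ Set.Icc (0:ℝ) 1) :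
    c ≤ resid T x y ↔ T x c ≤ y := by
  constructor
  · intro h
    have h1 : T x c ≤ T x (resid T x y) :=
      hT.mono x hx x hx c hc _ (resid_mem hT hx hy) le_rfl h
    exact h1.trans (T_resid_le hT hTlc hx hy)
  · intro h
    exact le_csSup residSet_bdd ⟨hc, h⟩

lemma resid_one {T : ℝ → ℝ → ℝ} (hT : IsTNorm T) {y : ℝ} (hy : y ∈ Set.Icc (0:ℝ) 1) :
    resid T 1 y = y := by
  have h11 : (1:ℝ) ∈ Set.Icc (0:ℝ) 1 := ⟨zero_le_one, le_rfl⟩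
  apply le_antisymm
  · refine csSup_le (residSet_nonempty hT h11 hy.1) fun l hl => ?_
    have := hl.2
    rwa [hT.one_left l hl.1] at this
  · exact le_csSup residSet_bdd ⟨hy, by rw [hT.one_left y hy]⟩

end Stmt5Aux


/-- the Choquet lower approximation is a fixed point of the classical
lower approximation. -/
theorem stmt5 {X : Type*} [Fintype X] [Nonempty X]
    (T : ℝ → ℝ → ℝ) (hT : IsTNorm T) (hTlc : LeftContinuousTNorm T) (hTconv : DConvex T)
    (μ : Set X → ℝ) (hμ : IsMonotoneMeasure μ)
    (R : X → X → ℝ) (hR : IsTEquiv T R)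
    (A : X → ℝ) (hA : ∀ x, A x ∈ Set.Icc (0:ℝ) 1) :
    ∀ y : X,
      Finset.univ.inf' Finset.univ_nonempty
          (fun x => resid T (R x y) (choquet μ (fun x' => resid T (R x' x) (A x'))))
        = choquet μ (fun x' => resid T (R x' y) (A x')) := by
  intro y
  classical
  open Stmt5Aux in
  have hresid_mem : ∀ x' z : X, resid T (R x' z) (A x') ∈ Set.Icc (0:ℝ) 1 :=
    fun x' z => Stmt5Aux.resid_mem hT (hR.mem x' z) (hA x').1
  have hLmem : ∀ z : X,
      choquet μ (fun x' => resid T (R x' z) (A x')) ∈ Set.Icc (0:ℝ) 1 :=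
    fun z => Stmt5Aux.choquet_mem_Icc hμ (fun x' => hresid_mem x' z)
  apply le_antisymm
  · have h1 := Finset.inf'_le
      (fun x => resid T (R x y) (choquet μ (fun x' => resid T (R x' x) (A x'))))
      (Finset.mem_univ y)
    calc Finset.univ.inf' Finset.univ_nonempty
          (fun x => resid T (R x y) (choquet μ (fun x' => resid T (R x' x) (A x'))))
        ≤ resid T (R y y) (choquet μ (fun x' => resid T (R x' y) (A x'))) := h1
      _ = choquet μ (fun x' => resid T (R x' y) (A x')) := by
          rw [hR.refl y]
          exact Stmt5Aux.resid_one hT (hLmem y)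
  · apply Finset.le_inf'
    intro x _
    rw [Stmt5Aux.le_resid_iff hT hTlc (hR.mem x y) (hLmem x).1 (hLmem y)]
    refine Stmt5Aux.key hT hTconv hμ (hR.mem x y)
      (fun x' => hresid_mem x' y) (fun x' => hresid_mem x' x) ?_
    intro x'
    rw [Stmt5Aux.le_resid_iff hT hTlc (hR.mem x' x) (hA x').1
      (hT.maps_to _ (hR.mem x y) _ (hresid_mem x' y))]
    have hrmem := hresid_mem x' y
    have hassoc : T (R x' x) (T (R x y) (resid T (R x' y) (A x')))
        = T (T (R x' x) (R x y)) (resid T (R x' y) (A x')) :=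
      (hT.assoc (R x' x) (hR.mem _ _) (R x y) (hR.mem _ _) _ hrmem).symm
    rw [hassoc]
    have htr : T (R x' x) (R x y) ≤ R x' y := hR.trans x' x y
    have hmono : T (T (R x' x) (R x y)) (resid T (R x' y) (A x'))
        ≤ T (R x' y) (resid T (R x' y) (A x')) :=
      hT.mono _ (hT.maps_to _ (hR.mem _ _) _ (hR.mem _ _)) _ (hR.mem _ _)
        _ hrmem _ hrmem htr le_rfl
    exact hmono.trans (Stmt5Aux.T_resid_le hT hTlc (hR.mem x' y) (hA x').1)
end

section
/- Let T be a D-convex left-continuous t-norm, μ a monotone measure on a finite nonempty set X, and R a T-equivalence relation on X. For every fuzzy set A on X, the Choquet upper approximation U(y) = ∫ T(R(x,y), A(x)) dμ(x) is a fixed point of the classical upper approximation: max_{x∈X} T(R(x,y), U(x)) = U(y) for every y ∈ X. -/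
open Finset MeasureTheory

namespace Stmt6Aux

variable {X : Type*}

/-- The "upper set" `{p j : j ≥ k}` of an enumeration `p`. -/
def upt {n : ℕ} (p : Fin n → X) (k : ℕ) : Set X :=
  {x | ∃ j : Fin n, k ≤ (j : ℕ) ∧ p j = x}

/-- `f ∘ p` reindexed over `ℕ`, padded with `1` above `n`. -/
noncomputable def pad {n : ℕ} (f : X → ℝ) (p : Fin n → X) (k : ℕ) : ℝ :=
  if h : k < n then f (p ⟨k, h⟩) else 1

lemma pad_coe {n : ℕ} (f : X → ℝ) (p : Fin n → X) (j : Fin n) :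
    pad f p (j : ℕ) = f (p j) := by
  simp [pad, j.isLt]

lemma pad_mem {n : ℕ} {f : X → ℝ} (hf : ∀ x, f x ∈ Set.Icc (0:ℝ) 1)
    (p : Fin n → X) (k : ℕ) : pad f p k ∈ Set.Icc (0:ℝ) 1 := by
  unfold pad; split
  · exact hf _
  · exact ⟨zero_le_one, le_rfl⟩

lemma pad_mono {n : ℕ} {f : X → ℝ} (hf : ∀ x, f x ≤ 1) {p : Fin n → X}
    (h : Monotone fun j : Fin n => f (p j)) : Monotone (pad f p) := by
  intro k l hkl
  by_cases hl : l < n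
  · have hk : k < n := lt_of_le_of_lt hkl hl
    simp only [pad, dif_pos hl, dif_pos hk]
    exact h (show (⟨k, hk⟩ : Fin n) ≤ ⟨l, hl⟩ from hkl)
  · simp only [pad, dif_neg hl]
    split
    · exact hf _
    · exact le_rfl

lemma upt_succ_subset {n : ℕ} (p : Fin n → X) (k : ℕ) : upt p (k+1) ⊆ upt p k := by
  rintro x ⟨j, hj, rfl⟩; exact ⟨j, by omega, rfl⟩

lemma upt_zero {n : ℕ} {p : Fin n → X} (hp : Function.Surjective p) :
    upt p 0 = Set.univ :=
  Set.eq_univ_of_forall fun x => by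
    obtain ⟨j, rfl⟩ := hp x; exact ⟨j, Nat.zero_le _, rfl⟩

lemma upt_top {n : ℕ} (p : Fin n → X) : upt p n = ∅ :=
  Set.eq_empty_iff_forall_notMem.mpr fun x ⟨j, hj, _⟩ => absurd j.isLt (by omega)

/-- Key representation: the Choquet sum computed with a sorted enumeration equals
`∫ t in 0..1, μ {x | t ≤ f x}`. -/
lemma csum_eq_integral {n : ℕ} (μ : Set X → ℝ) (hμ : IsMonotoneMeasure μ)
    (f : X → ℝ) (hf : ∀ x, f x ∈ Set.Icc (0:ℝ) 1)
    (p : Fin n → X) (hps : Function.Surjective p)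
    (hm : Monotone (pad f p)) :
    ∑ i ∈ Finset.range n, pad f p i * (μ (upt p i) - μ (upt p (i+1)))
      = ∫ t in (0:ℝ)..1, μ {x | t ≤ f x} := by
  have hμ0 : ∀ S : Set X, 0 ≤ μ S := fun S => by
    have := hμ.mono ∅ S (Set.empty_subset S); rwa [hμ.empty] at this
  set F : ℝ → ℝ := fun t => μ {x | t ≤ f x} with hF
  have hFanti : Antitone F := fun s t hst =>
    hμ.mono _ _ (fun x hx => le_trans hst hx)
  set c : ℕ → ℝ := fun i => if i = 0 then 0 else pad f p (i-1) with hc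
  have hpad0 : ∀ k, 0 ≤ pad f p k := fun k => (pad_mem hf p k).1
  have hpad1 : ∀ k, pad f p k ≤ 1 := fun k => (pad_mem hf p k).2
  have hcsucc : ∀ i, c (i+1) = pad f p i := fun i => by simp [hc]
  have hc0 : c 0 = 0 := by simp [hc]
  have hctop : c (n+1) = 1 := by
    rw [hcsucc]; simp [pad]
  have hcmono : Monotone c := by
    apply monotone_nat_of_le_succ
    intro i
    cases i with
    | zero => rw [hc0, hcsucc]; exact hpad0 0
    | succ i => rw [hcsucc, hcsucc]; exact hm (Nat.le_succ i)
  -- the value of F on each interval piece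
  have hkey : ∀ i, i ≤ n → ∀ t ∈ Set.Ioc (c i) (c (i+1)),
      F t = (if i < n then μ (upt p i) else 0) := by
    intro i hi t ht
    by_cases hin : i < n
    · rw [if_pos hin]
      have hset : {x | t ≤ f x} = upt p i := by
        ext x
        simp only [Set.mem_setOf_eq]
        constructor
        · intro htx
          obtain ⟨j, rfl⟩ := hps x
          refine ⟨j, ?_, rfl⟩
          by_contra hji
          push_neg at hji
          have hipos : 0 < i := by omega
          have hjlt : (j : ℕ) < n := j.isLt
          have h1 : pad f p (j : ℕ) ≤ pad f p (i-1) := hm (by omega)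
          have h2 : c i = pad f p (i-1) := by
            rw [hc]; simp [Nat.pos_iff_ne_zero.mp hipos]
          rw [pad_coe] at h1
          have := ht.1
          linarith
        · rintro ⟨j, hij, rfl⟩
          have h1 : pad f p i ≤ pad f p (j : ℕ) := hm hij
          rw [pad_coe] at h1
          have := ht.2
          rw [hcsucc] at this
          linarith
      rw [hF]; simp only []
      rw [hset]
    · rw [if_neg hin]
      have hin' : i = n := le_antisymm hi (not_lt.mp hin)
      have hset : {x | t ≤ f x} = (∅ : Set X) := by
        ext x
        simp only [Set.mem_setOf_eq, Set.mem_empty_iff_false, iff_false, not_le]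
        obtain ⟨j, rfl⟩ := hps x
        have hn1 : 0 < n := j.pos
        have hjlt : (j : ℕ) < n := j.isLt
        have h1 : pad f p (j : ℕ) ≤ pad f p (n-1) := hm (by omega)
        have h2 : c n = pad f p (n-1) := by
          rw [hc]; simp [Nat.pos_iff_ne_zero.mp hn1]
        rw [pad_coe] at h1
        have h3 := ht.1
        rw [hin'] at h3
        linarith
      rw [hF]; simp only []
      rw [hset, hμ.empty]
  -- each piece integrates to a product
  have hpiece : ∀ i ≤ n, (∫ t in c i..c (i+1), F t)
      = (c (i+1) - c i) * (if i < n then μ (upt p i) else 0) := by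
    intro i hi
    have h1 : (∫ t in c i..c (i+1), F t)
        = ∫ _t in c i..c (i+1), (if i < n then μ (upt p i) else 0) := by
      apply intervalIntegral.integral_congr_ae
      apply MeasureTheory.ae_of_all
      intro t ht
      rw [Set.uIoc_of_le (hcmono (Nat.le_succ i))] at ht
      exact hkey i hi t ht
    rw [h1, intervalIntegral.integral_const, smul_eq_mul]
  -- sum over adjacent intervals
  have hsum : ∑ i ∈ Finset.range (n+1), ∫ t in c i..c (i+1), F t
      = ∫ t in (0:ℝ)..1, F t := by
    rw [intervalIntegral.sum_integral_adjacent_intervals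
      (fun k _ => hFanti.intervalIntegrable), hc0, hctop]
  have hmn : μ (upt p n) = 0 := by rw [upt_top]; exact hμ.empty
  have hswap : ∑ i ∈ Finset.range n, pad f p i * μ (upt p (i+1))
      = ∑ i ∈ Finset.range n, c i * μ (upt p i) := by
    calc ∑ i ∈ Finset.range n, pad f p i * μ (upt p (i+1))
        = ∑ i ∈ Finset.range n, c (i+1) * μ (upt p (i+1)) := by
          refine Finset.sum_congr rfl fun i _ => ?_; rw [hcsucc]
      _ = (∑ i ∈ Finset.range (n+1), c i * μ (upt p i)) - c 0 * μ (upt p 0) := by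
          rw [Finset.sum_range_succ' (fun i => c i * μ (upt p i)) n]; ring
      _ = ∑ i ∈ Finset.range (n+1), c i * μ (upt p i) := by rw [hc0]; ring
      _ = ∑ i ∈ Finset.range n, c i * μ (upt p i) := by
          rw [Finset.sum_range_succ, hmn]; ring
  calc ∑ i ∈ Finset.range n, pad f p i * (μ (upt p i) - μ (upt p (i+1)))
      = (∑ i ∈ Finset.range n, pad f p i * μ (upt p i))
        - ∑ i ∈ Finset.range n, pad f p i * μ (upt p (i+1)) := by
        rw [← Finset.sum_sub_distrib]; refine Finset.sum_congr rfl fun i _ => by ring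
    _ = ∑ i ∈ Finset.range n, (c (i+1) - c i) * (if i < n then μ (upt p i) else 0) := by
        rw [hswap, ← Finset.sum_sub_distrib]
        refine Finset.sum_congr rfl fun i hi => ?_
        rw [if_pos (Finset.mem_range.mp hi), hcsucc]; ring
    _ = ∑ i ∈ Finset.range (n+1), (c (i+1) - c i) * (if i < n then μ (upt p i) else 0) := by
        rw [Finset.sum_range_succ, if_neg (lt_irrefl n), mul_zero, add_zero]
    _ = ∑ i ∈ Finset.range (n+1), ∫ t in c i..c (i+1), F t := by
        refine Finset.sum_congr rfl fun i hi => ?_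
        have hlt := Finset.mem_range.mp hi
        exact (hpiece i (by omega)).symm
    _ = ∫ t in (0:ℝ)..1, F t := hsum

/-- The enumeration of `X` that sorts `f`. -/
noncomputable def sortEnum [Fintype X] (f : X → ℝ) : Fin (Fintype.card X) → X :=
  fun j => (Fintype.equivFin X).symm (Tuple.sort (f ∘ (Fintype.equivFin X).symm) j)

lemma sortEnum_surjective [Fintype X] (f : X → ℝ) : Function.Surjective (sortEnum f) :=
  fun x => ⟨(Tuple.sort (f ∘ (Fintype.equivFin X).symm)).symm ((Fintype.equivFin X) x),
    by simp [sortEnum]⟩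

lemma sortEnum_monotone [Fintype X] (f : X → ℝ) :
    Monotone fun j => f (sortEnum f j) :=
  Tuple.monotone_sort (f ∘ (Fintype.equivFin X).symm)

/-- Unfolding of `choquet` into the `ℕ`-indexed sum. -/
lemma choquet_repr [Fintype X] (μ : Set X → ℝ) (f : X → ℝ) :
    choquet μ f = ∑ i ∈ Finset.range (Fintype.card X),
      pad f (sortEnum f) i * (μ (upt (sortEnum f) i) - μ (upt (sortEnum f) (i+1))) := by
  rw [choquet]
  rw [← Fin.sum_univ_eq_sum_range]
  refine Finset.sum_congr rfl fun i _ => ?_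
  rw [pad_coe]
  show f (sortEnum f i) * _ = f (sortEnum f i) * _
  congr 2

lemma choquet_int [Fintype X] (μ : Set X → ℝ) (hμ : IsMonotoneMeasure μ)
    (f : X → ℝ) (hf : ∀ x, f x ∈ Set.Icc (0:ℝ) 1) :
    choquet μ f = ∫ t in (0:ℝ)..1, μ {x | t ≤ f x} := by
  rw [choquet_repr]
  exact csum_eq_integral μ hμ f hf _ (sortEnum_surjective f)
    (pad_mono (fun x => (hf x).2) (sortEnum_monotone f))

lemma convexOn_snd {T : ℝ → ℝ → ℝ} (hconv : DConvex T) {c : ℝ}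
    (hc : c ∈ Set.Icc (0:ℝ) 1) :
    ConvexOn ℝ (Set.Icc (0:ℝ) 1) (fun z => T c z) := by
  refine ⟨convex_Icc 0 1, ?_⟩
  intro u hu v hv a b ha hb hab
  have h := (hconv u hu v hv c hc a ⟨ha, by linarith⟩).2
  have hb' : b = 1 - a := by linarith
  simpa [smul_eq_mul, hb'] using h

end Stmt6Aux

/-- the Choquet upper approximation is a fixed point of the classical
upper approximation. -/
theorem stmt6 {X : Type*} [Fintype X] [Nonempty X]
    (T : ℝ → ℝ → ℝ) (hT : IsTNorm T) (hTlc : LeftContinuousTNorm T) (hTconv : DConvex T)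
    (μ : Set X → ℝ) (hμ : IsMonotoneMeasure μ)
    (R : X → X → ℝ) (hR : IsTEquiv T R)
    (A : X → ℝ) (hA : ∀ x, A x ∈ Set.Icc (0:ℝ) 1) :
    ∀ y : X,
      Finset.univ.sup' Finset.univ_nonempty
          (fun x => T (R x y) (choquet μ (fun x' => T (R x' x) (A x'))))
        = choquet μ (fun x' => T (R x' y) (A x')) := by
  intro y
  have hμ0 : ∀ S : Set X, 0 ≤ μ S := fun S => by
    have := hμ.mono ∅ S (Set.empty_subset S); rwa [hμ.empty] at this
  have hμ1 : ∀ S : Set X, μ S ≤ 1 := fun S => by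
    have := hμ.mono S Set.univ (Set.subset_univ S); rwa [hμ.univ] at this
  have hk01 : ∀ (z x' : X), T (R x' z) (A x') ∈ Set.Icc (0:ℝ) 1 :=
    fun z x' => hT.maps_to _ (hR.mem x' z) _ (hA x')
  have hanti : ∀ g : X → ℝ, Antitone (fun t => μ {x' | t ≤ g x'}) :=
    fun g s t hst => hμ.mono _ _ (fun x hx => le_trans hst hx)
  have hUint : ∀ z : X, choquet μ (fun x' => T (R x' z) (A x'))
      = ∫ t in (0:ℝ)..1, μ {x' | t ≤ T (R x' z) (A x')} :=
    fun z => Stmt6Aux.choquet_int μ hμ _ (hk01 z)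
  have hU01 : ∀ z : X, choquet μ (fun x' => T (R x' z) (A x')) ∈ Set.Icc (0:ℝ) 1 := by
    intro z
    rw [hUint z]
    constructor
    · exact intervalIntegral.integral_nonneg zero_le_one (fun u _ => hμ0 _)
    · have h := intervalIntegral.integral_mono_on (μ := MeasureTheory.volume)
        (f := fun t => μ {x' | t ≤ T (R x' z) (A x')}) (g := fun _ => (1:ℝ))
        zero_le_one ((hanti _).intervalIntegrable) intervalIntegrable_const
        (fun t _ => hμ1 {x' | t ≤ T (R x' z) (A x')})
      simpa using h
  have hkey : ∀ x : X,
      T (R x y) (choquet μ (fun x' => T (R x' x) (A x')))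
        ≤ choquet μ (fun x' => T (R x' y) (A x')) := by
    intro x
    set f : X → ℝ := fun x' => T (R x' x) (A x') with hfdef
    have hf : ∀ x', f x' ∈ Set.Icc (0:ℝ) 1 := hk01 x
    have hc : R x y ∈ Set.Icc (0:ℝ) 1 := hR.mem x y
    set p := Stmt6Aux.sortEnum f with hp
    have hpsurj : Function.Surjective p := Stmt6Aux.sortEnum_surjective f
    set w : ℕ → ℝ := fun i => μ (Stmt6Aux.upt p i) - μ (Stmt6Aux.upt p (i+1)) with hw
    have hw0 : ∀ i ∈ Finset.range (Fintype.card X), 0 ≤ w i :=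
      fun i _ => sub_nonneg.mpr (hμ.mono _ _ (Stmt6Aux.upt_succ_subset p i))
    have hw1 : ∑ i ∈ Finset.range (Fintype.card X), w i = 1 := by
      rw [hw, Finset.sum_range_sub' (fun i => μ (Stmt6Aux.upt p i)) (Fintype.card X),
        Stmt6Aux.upt_zero hpsurj, Stmt6Aux.upt_top, hμ.univ, hμ.empty, sub_zero]
    have hrepr : choquet μ f
        = ∑ i ∈ Finset.range (Fintype.card X), w i • Stmt6Aux.pad f p i := by
      rw [Stmt6Aux.choquet_repr]
      exact Finset.sum_congr rfl fun i _ => by rw [smul_eq_mul]; ring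
    have hjensen : T (R x y) (choquet μ f)
        ≤ ∑ i ∈ Finset.range (Fintype.card X), w i • T (R x y) (Stmt6Aux.pad f p i) := by
      rw [hrepr]
      exact (Stmt6Aux.convexOn_snd hTconv hc).map_sum_le hw0 hw1
        (fun i _ => Stmt6Aux.pad_mem hf p i)
    set h : X → ℝ := fun x' => T (R x y) (f x') with hhdef
    have hh01 : ∀ x', h x' ∈ Set.Icc (0:ℝ) 1 := fun x' => hT.maps_to _ hc _ (hf x')
    have hsum2 : ∑ i ∈ Finset.range (Fintype.card X), w i • T (R x y) (Stmt6Aux.pad f p i)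
        = ∑ i ∈ Finset.range (Fintype.card X), Stmt6Aux.pad h p i * w i := by
      refine Finset.sum_congr rfl fun i hi => ?_
      have hilt : i < Fintype.card X := Finset.mem_range.mp hi
      rw [smul_eq_mul, mul_comm]
      congr 1
      simp [Stmt6Aux.pad, hilt, hhdef]
    have hhpmono : Monotone (Stmt6Aux.pad h p) := by
      refine Stmt6Aux.pad_mono (fun z => (hh01 z).2) ?_
      intro i j hij
      exact hT.mono _ hc _ hc _ (hf _) _ (hf _) le_rfl (Stmt6Aux.sortEnum_monotone f hij)
    have hint2 : ∑ i ∈ Finset.range (Fintype.card X), Stmt6Aux.pad h p i * w i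
        = ∫ t in (0:ℝ)..1, μ {x' | t ≤ h x'} :=
      Stmt6Aux.csum_eq_integral μ hμ h hh01 p hpsurj hhpmono
    have hhk : ∀ x', h x' ≤ T (R x' y) (A x') := by
      intro x'
      have e1 : h x' = T (T (R x y) (R x' x)) (A x') := by
        show T (R x y) (T (R x' x) (A x')) = _
        exact (hT.assoc _ hc _ (hR.mem x' x) _ (hA x')).symm
      have e2 : T (R x y) (R x' x) ≤ R x' y := by
        rw [hT.comm _ hc _ (hR.mem x' x)]
        exact hR.trans x' x y
      rw [e1]
      exact hT.mono _ (hT.maps_to _ hc _ (hR.mem x' x)) _ (hR.mem x' y)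
        _ (hA x') _ (hA x') e2 le_rfl
    have hmono_int : (∫ t in (0:ℝ)..1, μ {x' | t ≤ h x'})
        ≤ ∫ t in (0:ℝ)..1, μ {x' | t ≤ T (R x' y) (A x')} := by
      refine intervalIntegral.integral_mono_on zero_le_one
        ((hanti h).intervalIntegrable) ((hanti _).intervalIntegrable) ?_
      intro t _
      exact hμ.mono _ _ (fun x' hx' => le_trans hx' (hhk x'))
    calc T (R x y) (choquet μ f)
        ≤ ∑ i ∈ Finset.range (Fintype.card X), w i • T (R x y) (Stmt6Aux.pad f p i) :=
          hjensen
      _ = ∑ i ∈ Finset.range (Fintype.card X), Stmt6Aux.pad h p i * w i := hsum2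
      _ = ∫ t in (0:ℝ)..1, μ {x' | t ≤ h x'} := hint2
      _ ≤ ∫ t in (0:ℝ)..1, μ {x' | t ≤ T (R x' y) (A x')} := hmono_int
      _ = choquet μ (fun x' => T (R x' y) (A x')) := (hUint y).symm
  apply le_antisymm
  · exact Finset.sup'_le _ _ fun x _ => hkey x
  · have hle := Finset.le_sup'
      (fun x => T (R x y) (choquet μ (fun x' => T (R x' x) (A x')))) (Finset.mem_univ y)
    rwa [hR.refl y, hT.one_left _ (hU01 y)] at hle
end

section
/- Let T be a D-convex left-continuous t-norm, I its residual implicator, μ_l and μ_u monotone measures on a finite nonempty set X, and R a T-equivalence relation on X. For every fuzzy set A on X, the Choquet lower approximation L(y) = ∫ I(R(x,y), A(x)) dμ_l(x) and the Choquet upper approximation U(y) = ∫ T(R(x,y), A(x)) dμ_u(x) are both granularly representable fuzzy sets. -/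
/-- `A` is granularly representable w.r.t. `T` and `R`: for every `y`,
`A(y)` is the supremum of the values `T(λ, R(x,y))` over all granules
`R_λ(x) = (z ↦ T(λ, R(x,z)))` that are (pointwise) contained in `A`. -/
def GranRep {X : Type*} (T : ℝ → ℝ → ℝ) (R : X → X → ℝ) (A : X → ℝ) : Prop :=
  ∀ y, A y = sSup {v | ∃ l ∈ Set.Icc (0:ℝ) 1, ∃ x, (∀ z, T l (R x z) ≤ A z) ∧ v = T l (R x y)}


namespace Aux7


lemma mem01 : (0:ℝ) ∈ Set.Icc (0:ℝ) 1 := by norm_num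
lemma mem11 : (1:ℝ) ∈ Set.Icc (0:ℝ) 1 := by norm_num

variable {T : ℝ → ℝ → ℝ}

lemma T_zero_right (hT : IsTNorm T) {x : ℝ} (hx : x ∈ Set.Icc (0:ℝ) 1) : T x 0 = 0 := by
  have h1 := hT.mono x hx 1 mem11 0 mem01 0 mem01 hx.2 le_rfl
  have h2 := hT.one_left 0 mem01
  have h3 := (hT.maps_to x hx 0 mem01).1
  linarith

lemma T_one_right (hT : IsTNorm T) {x : ℝ} (hx : x ∈ Set.Icc (0:ℝ) 1) : T x 1 = x := by
  rw [hT.comm x hx 1 mem11]; exact hT.one_left x hx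

lemma residSet_nonempty (hT : IsTNorm T) {x y : ℝ} (hx : x ∈ Set.Icc (0:ℝ) 1)
    (hy0 : 0 ≤ y) : ((0:ℝ)) ∈ {l | l ∈ Set.Icc (0:ℝ) 1 ∧ T x l ≤ y} := by
  refine ⟨mem01, ?_⟩
  rw [T_zero_right hT hx]; exact hy0

lemma residSet_bdd {x y : ℝ} : BddAbove {l | l ∈ Set.Icc (0:ℝ) 1 ∧ T x l ≤ y} :=
  ⟨1, fun z hz => hz.1.2⟩

lemma resid_mem (hT : IsTNorm T) {x y : ℝ} (hx : x ∈ Set.Icc (0:ℝ) 1)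
    (hy0 : 0 ≤ y) : resid T x y ∈ Set.Icc (0:ℝ) 1 := by
  constructor
  · exact le_csSup residSet_bdd (residSet_nonempty hT hx hy0)
  · exact csSup_le ⟨0, residSet_nonempty hT hx hy0⟩ (fun z hz => hz.1.2)

lemma resid_le (hT : IsTNorm T) {x y l : ℝ} (hl : l ∈ Set.Icc (0:ℝ) 1)
    (h : T x l ≤ y) : l ≤ resid T x y :=
  le_csSup residSet_bdd ⟨hl, h⟩

lemma resid_sound (hT : IsTNorm T) (hTlc : LeftContinuousTNorm T) {x y : ℝ}
    (hx : x ∈ Set.Icc (0:ℝ) 1) (hy0 : 0 ≤ y) : T x (resid T x y) ≤ y := by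
  have hne : ({l | l ∈ Set.Icc (0:ℝ) 1 ∧ T x l ≤ y} : Set ℝ).Nonempty :=
    ⟨0, residSet_nonempty hT hx hy0⟩
  rw [resid, hTlc x hx _ hne (fun l hl => hl.1)]
  refine csSup_le (hne.image _) ?_
  rintro v ⟨l, hl, rfl⟩
  exact hl.2


variable {X : Type*} [Fintype X]
def bset (e : Fin (Fintype.card X) ≃ X) (τ : Equiv.Perm (Fin (Fintype.card X))) (k : ℕ) :
    Set X :=
  {x | ∃ j : Fin (Fintype.card X), k ≤ j.val ∧ e (τ j) = x}
noncomputable def gval (e : Fin (Fintype.card X) ≃ X) (τ : Equiv.Perm (Fin (Fintype.card X)))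
    (f : X → ℝ) (k : ℕ) : ℝ :=
  if h : k < Fintype.card X then f (e (τ ⟨k, h⟩)) else 1
lemma choquet_eq (μ : Set X → ℝ) (f : X → ℝ) :
    choquet μ f = ∑ k ∈ Finset.range (Fintype.card X),
      gval (Fintype.equivFin X).symm (Tuple.sort (f ∘ (Fintype.equivFin X).symm)) f k *
        (μ (bset (Fintype.equivFin X).symm (Tuple.sort (f ∘ (Fintype.equivFin X).symm)) k) -
         μ (bset (Fintype.equivFin X).symm (Tuple.sort (f ∘ (Fintype.equivFin X).symm)) (k+1))) := by
  simp only [choquet]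
  rw [← Fin.sum_univ_eq_sum_range]
  apply Finset.sum_congr rfl
  intro i _
  show _ = gval _ _ f i.val * _
  rw [gval, dif_pos i.isLt]
  congr 2

open Finset MeasureTheory intervalIntegral

lemma bset_zero (e : Fin (Fintype.card X) ≃ X) (τ : Equiv.Perm (Fin (Fintype.card X))) :
    bset e τ 0 = Set.univ := by
  ext x
  simp only [bset, Set.mem_setOf_eq, Set.mem_univ, iff_true]
  exact ⟨τ⁻¹ (e.symm x), Nat.zero_le _, by simp⟩

lemma bset_top (e : Fin (Fintype.card X) ≃ X) (τ : Equiv.Perm (Fin (Fintype.card X)))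
    {k : ℕ} (hk : Fintype.card X ≤ k) : bset e τ k = ∅ := by
  ext x
  simp only [bset, Set.mem_setOf_eq, Set.mem_empty_iff_false, iff_false]
  rintro ⟨j, hj, -⟩
  have := j.isLt
  omega

lemma bset_anti (e : Fin (Fintype.card X) ≃ X) (τ : Equiv.Perm (Fin (Fintype.card X)))
    {k l : ℕ} (h : k ≤ l) : bset e τ l ⊆ bset e τ k := by
  rintro x ⟨j, hj, rfl⟩
  exact ⟨j, h.trans hj, rfl⟩

lemma gval_mono {e : Fin (Fintype.card X) ≃ X} {τ : Equiv.Perm (Fin (Fintype.card X))}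
    {f : X → ℝ} (hm : Monotone (f ∘ e ∘ τ)) {i j : ℕ} (hij : i ≤ j)
    (hj : j < Fintype.card X) : gval e τ f i ≤ gval e τ f j := by
  have hi : i < Fintype.card X := lt_of_le_of_lt hij hj
  rw [gval, gval, dif_pos hi, dif_pos hj]
  exact hm (show (⟨i, hi⟩ : Fin _) ≤ ⟨j, hj⟩ from hij)

lemma gval_mem {e : Fin (Fintype.card X) ≃ X} {τ : Equiv.Perm (Fin (Fintype.card X))}
    {f : X → ℝ} (hf : ∀ x, f x ∈ Set.Icc (0:ℝ) 1) {k : ℕ} (hk : k < Fintype.card X) :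
    gval e τ f k ∈ Set.Icc (0:ℝ) 1 := by
  rw [gval, dif_pos hk]; exact hf _

lemma abel_aux (n : ℕ) (g β u : ℕ → ℝ) (hu0 : u 0 = 0)
    (huk : ∀ k, 1 ≤ k → k ≤ n → u k = g (k-1)) (hβn : β n = 0) :
    ∑ k ∈ Finset.range (n+1), (u (k+1) - u k) * β k
      = ∑ k ∈ Finset.range n, g k * (β k - β (k+1)) := by
  rcases Nat.eq_zero_or_pos n with rfl | hn
  · simp [hβn]
  obtain ⟨m, rfl⟩ : ∃ m, n = m + 1 := ⟨n - 1, by omega⟩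
  rw [Finset.sum_range_succ (fun k => (u (k+1) - u k) * β k) (m+1), hβn, mul_zero, add_zero]
  have h2 : ∀ k ∈ Finset.range (m+1), (u (k+1) - u k) * β k = g k * β k - u k * β k := by
    intro k hk
    have hk' := Finset.mem_range.mp hk
    rw [show u (k+1) = g k by simpa using huk (k+1) (by omega) (by omega)]
    ring
  rw [Finset.sum_congr rfl h2, Finset.sum_sub_distrib]
  have h3 : ∑ k ∈ Finset.range (m+1), u k * β k
      = ∑ k ∈ Finset.range m, g k * β (k+1) := by
    rw [Finset.sum_range_succ' (fun k => u k * β k) m, hu0, zero_mul, add_zero]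
    apply Finset.sum_congr rfl
    intro k hk
    have hk' := Finset.mem_range.mp hk
    rw [show u (k+1) = g k by simpa using huk (k+1) (by omega) (by omega)]
  rw [h3]
  have h4 : ∑ k ∈ Finset.range (m+1), g k * (β k - β (k+1))
      = ∑ k ∈ Finset.range (m+1), g k * β k - ∑ k ∈ Finset.range (m+1), g k * β (k+1) := by
    rw [← Finset.sum_sub_distrib]
    exact Finset.sum_congr rfl fun k _ => by ring
  rw [h4, Finset.sum_range_succ (fun k => g k * β (k+1)) m, hβn, mul_zero, add_zero]

noncomputable def upts (e : Fin (Fintype.card X) ≃ X) (τ : Equiv.Perm (Fin (Fintype.card X)))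
    (f : X → ℝ) (k : ℕ) : ℝ :=
  if k = 0 then 0 else if k ≤ Fintype.card X then gval e τ f (k-1) else 1

lemma sum_eq_integral [Nonempty X] {μ : Set X → ℝ} (hμ : IsMonotoneMeasure μ)
    (e : Fin (Fintype.card X) ≃ X) (τ : Equiv.Perm (Fin (Fintype.card X)))
    {f : X → ℝ} (hf : ∀ x, f x ∈ Set.Icc (0:ℝ) 1) (hm : Monotone (f ∘ e ∘ τ)) :
    ∑ k ∈ Finset.range (Fintype.card X),
        gval e τ f k * (μ (bset e τ k) - μ (bset e τ (k+1)))
      = ∫ t in (0:ℝ)..1, μ {x | t < f x} := by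
  classical
  have hn0 : 0 < Fintype.card X := Fintype.card_pos
  have hu0 : upts e τ f 0 = 0 := by simp [upts]
  have huk : ∀ k, 1 ≤ k → k ≤ Fintype.card X → upts e τ f k = gval e τ f (k-1) := by
    intro k h1 h2
    simp only [upts]; rw [if_neg (by omega), if_pos h2]
  have hun1 : upts e τ f (Fintype.card X + 1) = 1 := by
    simp only [upts]; rw [if_neg (by omega), if_neg (by omega)]
  have hβn : μ (bset e τ (Fintype.card X)) = 0 := by
    rw [bset_top e τ le_rfl, hμ.empty]
  have hustep : ∀ k, k ≤ Fintype.card X → upts e τ f k ≤ upts e τ f (k+1) := by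
    intro k hk
    rcases Nat.eq_zero_or_pos k with rfl | hk1
    · rw [hu0]
      rw [show (0:ℕ)+1 = 1 from rfl, huk 1 le_rfl hn0]
      exact (gval_mem hf (show 1-1 < Fintype.card X by omega)).1
    rcases eq_or_lt_of_le hk with heq | hkn
    · rw [heq, hun1, huk (Fintype.card X) (by omega) le_rfl]
      exact (gval_mem hf (by omega)).2
    · rw [huk k hk1 hk, huk (k+1) (by omega) hkn]
      exact gval_mono hm (by omega) (by omega)
  have hAnti : Antitone (fun t : ℝ => μ {x | t < f x}) := by
    intro s t hst
    exact hμ.mono _ _ fun x hx => lt_of_le_of_lt hst hx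
  have hadj := intervalIntegral.sum_integral_adjacent_intervals
      (a := upts e τ f) (n := Fintype.card X + 1) (f := fun t => μ {x | t < f x}) (μ := volume)
      (fun k _ => hAnti.intervalIntegrable)
  have hpiece : ∀ k, k ≤ Fintype.card X →
      (∫ t in upts e τ f k..upts e τ f (k+1), μ {x | t < f x})
        = (upts e τ f (k+1) - upts e τ f k) * μ (bset e τ k) := by
    intro k hk
    have hle : upts e τ f k ≤ upts e τ f (k+1) := hustep k hk
    have hset : ∀ t ∈ Set.Ioo (upts e τ f k) (upts e τ f (k+1)),
        {x | t < f x} = bset e τ k := by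
      intro t ht
      ext x
      simp only [Set.mem_setOf_eq, bset]
      constructor
      · intro hxt
        refine ⟨τ⁻¹ (e.symm x), ?_, by simp⟩
        by_contra hcon
        push_neg at hcon
        have hk1 : 1 ≤ k := by omega
        have hval : f x = gval e τ f ((τ⁻¹ (e.symm x)) : Fin (Fintype.card X)).val := by
          rw [gval, dif_pos (Fin.isLt _)]
          simp
        have hmono2 : gval e τ f ((τ⁻¹ (e.symm x)) : Fin (Fintype.card X)).val
            ≤ gval e τ f (k-1) :=
          gval_mono hm (by omega) (by omega)
        have huu : upts e τ f k = gval e τ f (k-1) := huk k hk1 hk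
        have h5 := ht.1
        rw [huu] at h5
        linarith [hxt]
      · rintro ⟨j, hj, rfl⟩
        have hkn : k < Fintype.card X := lt_of_le_of_lt hj j.isLt
        have h1 : upts e τ f (k+1) = gval e τ f k := by
          simpa using huk (k+1) (by omega) (by omega)
        have h2 : gval e τ f k ≤ gval e τ f j.val := gval_mono hm hj j.isLt
        have h3 : f (e (τ j)) = gval e τ f j.val := by
          rw [gval, dif_pos j.isLt]
        have h5 := ht.2
        rw [h1] at h5
        rw [h3]
        linarith
    have hcongr : (∫ t in upts e τ f k..upts e τ f (k+1), μ {x | t < f x})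
        = ∫ t in upts e τ f k..upts e τ f (k+1), (fun _ => μ (bset e τ k)) t := by
      apply intervalIntegral.integral_congr_ae
      have h0 : (volume : Measure ℝ) {upts e τ f (k+1)} = 0 := measure_singleton _
      filter_upwards [measure_eq_zero_iff_ae_notMem.mp h0] with t ht hmem
      rw [Set.uIoc_of_le hle] at hmem
      have htIoo : t ∈ Set.Ioo (upts e τ f k) (upts e τ f (k+1)) :=
        ⟨hmem.1, lt_of_le_of_ne hmem.2 (by simpa using ht)⟩
      rw [hset t htIoo]
    rw [hcongr, intervalIntegral.integral_const, smul_eq_mul]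
  calc ∑ k ∈ Finset.range (Fintype.card X),
        gval e τ f k * (μ (bset e τ k) - μ (bset e τ (k+1)))
      = ∑ k ∈ Finset.range (Fintype.card X + 1),
          (upts e τ f (k+1) - upts e τ f k) * μ (bset e τ k) :=
        (abel_aux (Fintype.card X) (gval e τ f) (fun k => μ (bset e τ k)) (upts e τ f)
          hu0 huk hβn).symm
    _ = ∑ k ∈ Finset.range (Fintype.card X + 1),
          ∫ t in upts e τ f k..upts e τ f (k+1), μ {x | t < f x} :=
        Finset.sum_congr rfl fun k hk =>
          (hpiece k (by have := Finset.mem_range.mp hk; omega)).symm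
    _ = ∫ t in (upts e τ f 0)..(upts e τ f (Fintype.card X + 1)), μ {x | t < f x} := hadj
    _ = ∫ t in (0:ℝ)..1, μ {x | t < f x} := by rw [hu0, hun1]

lemma weights_nonneg {μ : Set X → ℝ} (hμ : IsMonotoneMeasure μ)
    (e : Fin (Fintype.card X) ≃ X) (τ : Equiv.Perm (Fin (Fintype.card X))) (k : ℕ) :
    0 ≤ μ (bset e τ k) - μ (bset e τ (k+1)) :=
  sub_nonneg.mpr (hμ.mono _ _ (bset_anti e τ (Nat.le_succ k)))

lemma weights_sum {μ : Set X → ℝ} (hμ : IsMonotoneMeasure μ)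
    (e : Fin (Fintype.card X) ≃ X) (τ : Equiv.Perm (Fin (Fintype.card X))) :
    ∑ k ∈ Finset.range (Fintype.card X), (μ (bset e τ k) - μ (bset e τ (k+1))) = 1 := by
  rw [Finset.sum_range_sub' (fun k => μ (bset e τ k)) (Fintype.card X)]
  rw [bset_zero, bset_top e τ le_rfl, hμ.univ, hμ.empty, sub_zero]

lemma choquet_mem {μ : Set X → ℝ} (hμ : IsMonotoneMeasure μ) {f : X → ℝ}
    (hf : ∀ x, f x ∈ Set.Icc (0:ℝ) 1) : choquet μ f ∈ Set.Icc (0:ℝ) 1 := by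
  rw [choquet_eq]
  constructor
  · apply Finset.sum_nonneg
    intro k hk
    exact mul_nonneg (gval_mem hf (Finset.mem_range.mp hk)).1 (weights_nonneg hμ _ _ k)
  · calc ∑ k ∈ Finset.range (Fintype.card X),
          gval (Fintype.equivFin X).symm (Tuple.sort (f ∘ (Fintype.equivFin X).symm)) f k *
            (μ (bset (Fintype.equivFin X).symm (Tuple.sort (f ∘ (Fintype.equivFin X).symm)) k) -
             μ (bset (Fintype.equivFin X).symm (Tuple.sort (f ∘ (Fintype.equivFin X).symm)) (k+1)))
        ≤ ∑ k ∈ Finset.range (Fintype.card X),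
            (μ (bset (Fintype.equivFin X).symm (Tuple.sort (f ∘ (Fintype.equivFin X).symm)) k) -
             μ (bset (Fintype.equivFin X).symm (Tuple.sort (f ∘ (Fintype.equivFin X).symm)) (k+1))) := by
          apply Finset.sum_le_sum
          intro k hk
          exact mul_le_of_le_one_left (weights_nonneg hμ _ _ k)
            (gval_mem hf (Finset.mem_range.mp hk)).2
      _ = 1 := weights_sum hμ _ _

lemma anti_level {μ : Set X → ℝ} (hμ : IsMonotoneMeasure μ) (φ : X → ℝ) :
    Antitone (fun t : ℝ => μ {x | t < φ x}) := by
  intro s t hst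
  exact hμ.mono _ _ fun x hx => lt_of_le_of_lt hst hx

lemma choquet_T_le [Nonempty X] {T : ℝ → ℝ → ℝ} (hT : IsTNorm T) (hTconv : DConvex T)
    {μ : Set X → ℝ} (hμ : IsMonotoneMeasure μ) {c : ℝ} (hc : c ∈ Set.Icc (0:ℝ) 1)
    {f g : X → ℝ} (hf : ∀ x, f x ∈ Set.Icc (0:ℝ) 1) (hg : ∀ x, g x ∈ Set.Icc (0:ℝ) 1)
    (hfg : ∀ x, T c (f x) ≤ g x) : T c (choquet μ f) ≤ choquet μ g := by
  classical
  have hmono_f : Monotone (f ∘ (Fintype.equivFin X).symm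
      ∘ (Tuple.sort (f ∘ (Fintype.equivFin X).symm))) :=
    Tuple.monotone_sort (f ∘ (Fintype.equivFin X).symm)
  have hhmem : ∀ x, (fun x => T c (f x)) x ∈ Set.Icc (0:ℝ) 1 :=
    fun x => hT.maps_to c hc (f x) (hf x)
  have hmono_h : Monotone ((fun x => T c (f x)) ∘ (Fintype.equivFin X).symm
      ∘ (Tuple.sort (f ∘ (Fintype.equivFin X).symm))) := by
    intro i j hij
    exact hT.mono c hc c hc _ (hf _) _ (hf _) le_rfl (hmono_f hij)
  have hcvx : ConvexOn ℝ (Set.Icc (0:ℝ) 1) (fun t => T c t) := by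
    refine ⟨convex_Icc 0 1, ?_⟩
    intro x hx y hy a b ha hb hab
    have h1 := (hTconv x hx y hy c hc a ⟨ha, by linarith⟩).2
    have hb2 : b = 1 - a := by linarith
    simpa [smul_eq_mul, hb2] using h1
  have hjensen := hcvx.map_sum_le (t := Finset.range (Fintype.card X))
      (w := fun k => μ (bset (Fintype.equivFin X).symm
              (Tuple.sort (f ∘ (Fintype.equivFin X).symm)) k)
            - μ (bset (Fintype.equivFin X).symm
              (Tuple.sort (f ∘ (Fintype.equivFin X).symm)) (k+1)))
      (p := fun k => gval (Fintype.equivFin X).symm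
              (Tuple.sort (f ∘ (Fintype.equivFin X).symm)) f k)
      (fun k _ => weights_nonneg hμ _ _ k) (weights_sum hμ _ _)
      (fun k hk => gval_mem hf (Finset.mem_range.mp hk))
  have hch : choquet μ f = ∑ k ∈ Finset.range (Fintype.card X),
      (μ (bset (Fintype.equivFin X).symm (Tuple.sort (f ∘ (Fintype.equivFin X).symm)) k)
        - μ (bset (Fintype.equivFin X).symm (Tuple.sort (f ∘ (Fintype.equivFin X).symm)) (k+1)))
      • gval (Fintype.equivFin X).symm (Tuple.sort (f ∘ (Fintype.equivFin X).symm)) f k := by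
    rw [choquet_eq]
    exact Finset.sum_congr rfl fun k _ => by rw [smul_eq_mul, mul_comm]
  calc T c (choquet μ f)
      ≤ ∑ k ∈ Finset.range (Fintype.card X),
          (μ (bset (Fintype.equivFin X).symm (Tuple.sort (f ∘ (Fintype.equivFin X).symm)) k)
            - μ (bset (Fintype.equivFin X).symm
                (Tuple.sort (f ∘ (Fintype.equivFin X).symm)) (k+1)))
          • T c (gval (Fintype.equivFin X).symm
              (Tuple.sort (f ∘ (Fintype.equivFin X).symm)) f k) := by
        rw [hch]; exact hjensen
    _ = ∑ k ∈ Finset.range (Fintype.card X),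
          gval (Fintype.equivFin X).symm (Tuple.sort (f ∘ (Fintype.equivFin X).symm))
            (fun x => T c (f x)) k *
          (μ (bset (Fintype.equivFin X).symm (Tuple.sort (f ∘ (Fintype.equivFin X).symm)) k)
            - μ (bset (Fintype.equivFin X).symm
                (Tuple.sort (f ∘ (Fintype.equivFin X).symm)) (k+1))) := by
        apply Finset.sum_congr rfl
        intro k hk
        have hk2 := Finset.mem_range.mp hk
        rw [smul_eq_mul, mul_comm]
        congr 1
        rw [gval, gval, dif_pos hk2, dif_pos hk2]
    _ = ∫ t in (0:ℝ)..1, μ {x | t < T c (f x)} :=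
        sum_eq_integral hμ _ _ hhmem hmono_h
    _ ≤ ∫ t in (0:ℝ)..1, μ {x | t < g x} := by
        apply intervalIntegral.integral_mono_on (by norm_num)
          ((anti_level hμ (fun x => T c (f x))).intervalIntegrable)
          ((anti_level hμ g).intervalIntegrable)
        intro t ht
        exact hμ.mono _ _ fun x hx => lt_of_lt_of_le hx (hfg x)
    _ = choquet μ g := by
        rw [choquet_eq μ g]
        exact (sum_eq_integral hμ _ _ hg
          (Tuple.monotone_sort (g ∘ (Fintype.equivFin X).symm))).symm

lemma granRep_of_ext {T : ℝ → ℝ → ℝ} (hT : IsTNorm T) {R : X → X → ℝ} (hR : IsTEquiv T R)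
    {B : X → ℝ} (hB : ∀ y, B y ∈ Set.Icc (0:ℝ) 1)
    (hext : ∀ y z, T (R y z) (B y) ≤ B z) : GranRep T R B := by
  intro y
  have hub : ∀ v ∈ {v | ∃ l ∈ Set.Icc (0:ℝ) 1, ∃ x, (∀ z, T l (R x z) ≤ B z) ∧ v = T l (R x y)},
      v ≤ B y := by
    rintro v ⟨l, hl, x, hx, rfl⟩
    exact hx y
  have hmem : B y ∈ {v | ∃ l ∈ Set.Icc (0:ℝ) 1, ∃ x, (∀ z, T l (R x z) ≤ B z) ∧ v = T l (R x y)} := by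
    refine ⟨B y, hB y, y, ?_, ?_⟩
    · intro z
      rw [hT.comm (B y) (hB y) (R y z) (hR.mem y z)]
      exact hext y z
    · rw [hR.refl y, T_one_right hT (hB y)]
  exact le_antisymm (le_csSup ⟨B y, hub⟩ hmem) (csSup_le ⟨_, hmem⟩ hub)

end Aux7

/-- the Choquet lower and upper approximations are granularly representable. -/
theorem stmt7 {X : Type*} [Fintype X] [Nonempty X]
    (T : ℝ → ℝ → ℝ) (hT : IsTNorm T) (hTlc : LeftContinuousTNorm T) (hTconv : DConvex T)
    (μl μu : Set X → ℝ) (hμl : IsMonotoneMeasure μl) (hμu : IsMonotoneMeasure μu)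
    (R : X → X → ℝ) (hR : IsTEquiv T R)
    (A : X → ℝ) (hA : ∀ x, A x ∈ Set.Icc (0:ℝ) 1) :
    GranRep T R (fun y => choquet μl (fun x => resid T (R x y) (A x))) ∧
    GranRep T R (fun y => choquet μu (fun x => T (R x y) (A x))) := by
  classical
  have hRm := hR.mem
  have hmemL : ∀ y, (fun x => resid T (R x y) (A x)) = (fun x => resid T (R x y) (A x)) := fun _ => rfl
  constructor
  · apply Aux7.granRep_of_ext hT hR
      (fun y => Aux7.choquet_mem hμl (fun x => Aux7.resid_mem hT (hRm x y) (hA x).1))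
    intro y z
    apply Aux7.choquet_T_le hT hTconv hμl (hRm y z)
      (fun x => Aux7.resid_mem hT (hRm x y) (hA x).1)
      (fun x => Aux7.resid_mem hT (hRm x z) (hA x).1)
    intro x
    have hl : resid T (R x y) (A x) ∈ Set.Icc (0:ℝ) 1 := Aux7.resid_mem hT (hRm x y) (hA x).1
    apply Aux7.resid_le hT (hT.maps_to _ (hRm y z) _ hl)
    have h1 : T (R x z) (T (R y z) (resid T (R x y) (A x)))
        = T (T (R x z) (R y z)) (resid T (R x y) (A x)) :=
      (hT.assoc _ (hRm x z) _ (hRm y z) _ hl).symm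
    rw [h1]
    have h2 : T (R x z) (R y z) ≤ R x y := by
      rw [show R y z = R z y from hR.symm y z]
      exact hR.trans x z y
    calc T (T (R x z) (R y z)) (resid T (R x y) (A x))
        ≤ T (R x y) (resid T (R x y) (A x)) :=
          hT.mono _ (hT.maps_to _ (hRm x z) _ (hRm y z)) _ (hRm x y) _ hl _ hl h2 le_rfl
      _ ≤ A x := Aux7.resid_sound hT hTlc (hRm x y) (hA x).1
  · apply Aux7.granRep_of_ext hT hR
      (fun y => Aux7.choquet_mem hμu (fun x => hT.maps_to _ (hRm x y) _ (hA x)))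
    intro y z
    apply Aux7.choquet_T_le hT hTconv hμu (hRm y z)
      (fun x => hT.maps_to _ (hRm x y) _ (hA x))
      (fun x => hT.maps_to _ (hRm x z) _ (hA x))
    intro x
    have h1 : T (R y z) (T (R x y) (A x)) = T (T (R y z) (R x y)) (A x) :=
      (hT.assoc _ (hRm y z) _ (hRm x y) _ (hA x)).symm
    rw [h1]
    have h2 : T (R y z) (R x y) ≤ R x z := by
      rw [hT.comm _ (hRm y z) _ (hRm x y)]
      exact hR.trans x y z
    exact hT.mono _ (hT.maps_to _ (hRm y z) _ (hRm x y)) _ (hRm x z) _ (hA x) _ (hA x) h2 le_rfl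
end

section
/- (Jensen's inequality for Sugeno integrals, expansive case.) Let μ be a monotone measure on a finite nonempty set X, f : X → [0,∞), and Φ : [0,∞) → [0,∞) a non-decreasing function with Φ(x) ≥ x for every x ∈ [0,1]. Then Φ(⨍ f dμ) ≥ ⨍ (Φ ∘ f) dμ, where both integrals are Sugeno integrals w.r.t. μ. -/
/-- The Sugeno integral of `f : X → ℝ` w.r.t. `μ` on the finite nonempty set `X`:
`max_i min(μ(A*_i), f(x*_i))` where `x*` enumerates `X` with
`f(x*_1) ≤ … ≤ f(x*_n)` and `A*_i = {x*_i, …, x*_n}`. -/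
noncomputable def sugeno {X : Type*} [Fintype X] [Nonempty X] (μ : Set X → ℝ) (f : X → ℝ) : ℝ :=
  let e : Fin (Fintype.card X) ≃ X := (Fintype.equivFin X).symm
  let σ : Equiv.Perm (Fin (Fintype.card X)) := Tuple.sort (f ∘ e)
  haveI : Nonempty (Fin (Fintype.card X)) := Fin.pos_iff_nonempty.mp Fintype.card_pos
  Finset.univ.sup' Finset.univ_nonempty
    (fun i => min (μ {x | ∃ j, i ≤ j ∧ e (σ j) = x}) (f (e (σ i))))

/-- Lower bound for the Sugeno integral: any set with its minimum gives a lower bound. -/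
lemma sugeno_ge {X : Type*} [Fintype X] [Nonempty X]
    (μ : Set X → ℝ) (hμ : IsMonotoneMeasure μ) (f : X → ℝ)
    (A : Set X) (y : X) (hy : y ∈ A) (hmin : ∀ z ∈ A, f y ≤ f z) :
    min (μ A) (f y) ≤ sugeno μ f := by
  classical
  unfold sugeno
  set e : Fin (Fintype.card X) ≃ X := (Fintype.equivFin X).symm with he
  set σ : Equiv.Perm (Fin (Fintype.card X)) := Tuple.sort (f ∘ e) with hσ
  haveI : Nonempty (Fin (Fintype.card X)) := Fin.pos_iff_nonempty.mp Fintype.card_pos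
  set T : Finset (Fin (Fintype.card X)) := Finset.univ.filter (fun j => e (σ j) ∈ A) with hT
  have hTne : T.Nonempty := by
    refine ⟨σ.symm (e.symm y), ?_⟩
    simp [hT, hy]
  set i0 := T.min' hTne with hi0
  have hi0mem : e (σ i0) ∈ A := by
    have := T.min'_mem hTne
    simpa [hT] using this
  have hle : min (μ A) (f y) ≤
      min (μ {x | ∃ j, i0 ≤ j ∧ e (σ j) = x}) (f (e (σ i0))) := by
    apply min_le_min
    · apply hμ.mono
      intro z hz
      obtain ⟨j, hj⟩ : ∃ j, e (σ j) = z := ⟨σ.symm (e.symm z), by simp⟩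
      refine ⟨j, ?_, hj⟩
      apply T.min'_le
      simp [hT, hj, hz]
    · exact hmin _ hi0mem
  refine hle.trans ?_
  exact Finset.le_sup' (fun i => min (μ {x | ∃ j, i ≤ j ∧ e (σ j) = x}) (f (e (σ i))))
    (Finset.mem_univ i0)

/-- Jensen's inequality for Sugeno integrals, expansive case. -/
theorem stmt8 {X : Type*} [Fintype X] [Nonempty X]
    (μ : Set X → ℝ) (hμ : IsMonotoneMeasure μ)
    (f : X → ℝ) (hf : ∀ x, 0 ≤ f x)
    (Φ : ℝ → ℝ) (hΦnn : ∀ x : ℝ, 0 ≤ x → 0 ≤ Φ x)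
    (hΦmono : ∀ x y : ℝ, 0 ≤ x → x ≤ y → Φ x ≤ Φ y)
    (hΦexp : ∀ x ∈ Set.Icc (0:ℝ) 1, x ≤ Φ x) :
    sugeno μ (fun x => Φ (f x)) ≤ Φ (sugeno μ f) := by
  classical
  conv_lhs => rw [sugeno]
  set e : Fin (Fintype.card X) ≃ X := (Fintype.equivFin X).symm with he
  set g : X → ℝ := fun x => Φ (f x) with hg
  set σ : Equiv.Perm (Fin (Fintype.card X)) := Tuple.sort (g ∘ e) with hσ
  haveI : Nonempty (Fin (Fintype.card X)) := Fin.pos_iff_nonempty.mp Fintype.card_pos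
  apply Finset.sup'_le
  intro i _
  set Ai : Set X := {x | ∃ j, i ≤ j ∧ e (σ j) = x} with hAi
  -- basic facts about μ Ai
  have hμ0 : 0 ≤ μ Ai := by
    have := hμ.mono ∅ Ai (Set.empty_subset _)
    simpa [hμ.empty] using this
  have hμ1 : μ Ai ≤ 1 := by
    have := hμ.mono Ai Set.univ (Set.subset_univ _)
    simpa [hμ.univ] using this
  -- pick y ∈ Ai minimizing f
  obtain ⟨j0, hj0mem, hj0min⟩ :=
    Finset.exists_min_image (Finset.Ici i) (fun j => f (e (σ j))) ⟨i, by simp⟩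
  have hj0i : i ≤ j0 := Finset.mem_Ici.mp hj0mem
  set y : X := e (σ j0) with hy
  have hyA : y ∈ Ai := ⟨j0, hj0i, rfl⟩
  have hymin : ∀ z ∈ Ai, f y ≤ f z := by
    rintro z ⟨j, hij, rfl⟩
    exact hj0min j (Finset.mem_Ici.mpr hij)
  have hS : min (μ Ai) (f y) ≤ sugeno μ f := sugeno_ge μ hμ f Ai y hyA hymin
  -- sortedness of g along σ
  have hsorted : ∀ j, i ≤ j → g (e (σ i)) ≤ g (e (σ j)) := fun j hij =>
    Tuple.monotone_sort (g ∘ e) hij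
  -- the key bounds
  have hmin_nn : 0 ≤ min (μ Ai) (f y) := le_min hμ0 (hf y)
  have hΦS : Φ (min (μ Ai) (f y)) ≤ Φ (sugeno μ f) := hΦmono _ _ hmin_nn hS
  have hsplit : min (μ Ai) (g (e (σ i))) ≤ Φ (min (μ Ai) (f y)) := by
    rcases le_total (μ Ai) (f y) with h | h
    · rw [min_eq_left h]
      calc min (μ Ai) (g (e (σ i))) ≤ μ Ai := min_le_left _ _
        _ ≤ Φ (μ Ai) := hΦexp _ ⟨hμ0, hμ1⟩
    · rw [min_eq_right h]
      calc min (μ Ai) (g (e (σ i))) ≤ g (e (σ i)) := min_le_right _ _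
        _ ≤ g y := hsorted j0 hj0i
        _ = Φ (f y) := rfl
  exact le_trans hsplit hΦS
end

section
/- (Jensen's inequality for Sugeno integrals, contractive case.) Let μ be a monotone measure on a finite nonempty set X, f : X → [0,∞), and Φ : [0,∞) → [0,∞) a non-decreasing function with Φ(x) ≤ x for every x ∈ [0,1]. Then Φ(⨍ f dμ) ≤ ⨍ (Φ ∘ f) dμ, where both integrals are Sugeno integrals w.r.t. μ. -/
section aux

variable {X : Type*} [Fintype X] [Nonempty X]

instance : Nonempty (Fin (Fintype.card X)) := Fin.pos_iff_nonempty.mp Fintype.card_pos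

lemma sugeno_def (μ : Set X → ℝ) (f : X → ℝ) :
    sugeno μ f = Finset.univ.sup' Finset.univ_nonempty
      (fun i => min
        (μ {x | ∃ j, i ≤ j ∧ (Fintype.equivFin X).symm (Tuple.sort (f ∘ (Fintype.equivFin X).symm) j) = x})
        (f ((Fintype.equivFin X).symm (Tuple.sort (f ∘ (Fintype.equivFin X).symm) i)))) := rfl

lemma sugeno_lower (μ : Set X → ℝ) (hμ : IsMonotoneMeasure μ) (g : X → ℝ)
    (A : Set X) (t : ℝ) (hA : A.Nonempty) (ht : ∀ x ∈ A, t ≤ g x) :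
    min (μ A) t ≤ sugeno μ g := by
  classical
  rw [sugeno_def]
  set e : Fin (Fintype.card X) ≃ X := (Fintype.equivFin X).symm with he
  set σ : Equiv.Perm (Fin (Fintype.card X)) := Tuple.sort (g ∘ e) with hσ
  obtain ⟨x0, hx0⟩ := hA
  have hne : (Finset.univ.filter (fun i => e (σ i) ∈ A)).Nonempty := by
    refine ⟨σ.symm (e.symm x0), ?_⟩
    simp [hx0]
  set i0 := (Finset.univ.filter (fun i => e (σ i) ∈ A)).min' hne with hi0
  have hi0mem := Finset.min'_mem _ hne
  rw [← hi0] at hi0mem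
  have hi0A : e (σ i0) ∈ A := (Finset.mem_filter.mp hi0mem).2
  have hsub : A ⊆ {x | ∃ j, i0 ≤ j ∧ e (σ j) = x} := by
    intro x hx
    refine ⟨σ.symm (e.symm x), ?_, by simp⟩
    apply Finset.min'_le
    simp [hx]
  calc min (μ A) t ≤ min (μ {x | ∃ j, i0 ≤ j ∧ e (σ j) = x}) (g (e (σ i0))) := by
        exact min_le_min (hμ.mono _ _ hsub) (ht _ hi0A)
    _ ≤ _ := Finset.le_sup' (fun i => min (μ {x | ∃ j, i ≤ j ∧ e (σ j) = x}) (g (e (σ i)))) (Finset.mem_univ i0)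

end aux

/-- Jensen's inequality for Sugeno integrals, contractive case. -/
theorem stmt9 {X : Type*} [Fintype X] [Nonempty X]
    (μ : Set X → ℝ) (hμ : IsMonotoneMeasure μ)
    (f : X → ℝ) (hf : ∀ x, 0 ≤ f x)
    (Φ : ℝ → ℝ) (hΦnn : ∀ x : ℝ, 0 ≤ x → 0 ≤ Φ x)
    (hΦmono : ∀ x y : ℝ, 0 ≤ x → x ≤ y → Φ x ≤ Φ y)
    (hΦcon : ∀ x ∈ Set.Icc (0:ℝ) 1, Φ x ≤ x) :
    Φ (sugeno μ f) ≤ sugeno μ (fun x => Φ (f x)) := by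
  set e : Fin (Fintype.card X) ≃ X := (Fintype.equivFin X).symm with he
  set σ : Equiv.Perm (Fin (Fintype.card X)) := Tuple.sort (f ∘ e) with hσ
  obtain ⟨i0, -, hi0⟩ := Finset.exists_mem_eq_sup' (Finset.univ_nonempty (α := Fin (Fintype.card X)))
    (fun i => min (μ {x | ∃ j, i ≤ j ∧ e (σ j) = x}) (f (e (σ i))))
  have hs : sugeno μ f = min (μ {x | ∃ j, i0 ≤ j ∧ e (σ j) = x}) (f (e (σ i0))) := by
    rw [sugeno_def]; exact hi0
  set A := {x | ∃ j, i0 ≤ j ∧ e (σ j) = x} with hA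
  have hμA0 : 0 ≤ μ A := hμ.empty ▸ hμ.mono _ _ (Set.empty_subset A)
  have hμA1 : μ A ≤ 1 := hμ.univ ▸ hμ.mono _ _ (Set.subset_univ A)
  have hstep : Φ (sugeno μ f) ≤ min (μ A) (Φ (f (e (σ i0)))) := by
    rw [hs]
    refine le_min ?_ ?_
    · calc Φ (min (μ A) (f (e (σ i0)))) ≤ Φ (μ A) :=
            hΦmono _ _ (le_min hμA0 (hf _)) (min_le_left _ _)
        _ ≤ μ A := hΦcon _ ⟨hμA0, hμA1⟩
    · exact hΦmono _ _ (le_min hμA0 (hf _)) (min_le_right _ _)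
  refine hstep.trans ?_
  apply sugeno_lower μ hμ
  · exact ⟨e (σ i0), ⟨i0, le_refl _, rfl⟩⟩
  · rintro x ⟨j, hj, rfl⟩
    exact hΦmono _ _ (hf _) (Tuple.monotone_sort (f ∘ e) hj)
end

section
/- Let T be a left-continuous t-norm, μ a monotone measure on a finite nonempty set X, and R a T-equivalence relation on X. For every fuzzy set A on X, the Sugeno upper approximation U(y) = ⨍ T(R(x,y), A(x)) dμ(x) is a fixed point of the classical upper approximation: max_{x∈X} T(R(x,y), U(x)) = U(y) for every y ∈ X. -/
/-- Key lower bound: if `c ≤ f w` on a nonempty set `S`, then `min (μ S) c ≤ sugeno μ f`. -/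
lemma sugeno_ge_aux {X : Type*} [Fintype X] [Nonempty X] (μ : Set X → ℝ)
    (hμmono : ∀ E F : Set X, E ⊆ F → μ E ≤ μ F)
    (f : X → ℝ) (S : Set X) (hS : S.Nonempty) (c : ℝ)
    (hc : ∀ w ∈ S, c ≤ f w) : min (μ S) c ≤ sugeno μ f := by
  classical
  simp only [sugeno]
  set e : Fin (Fintype.card X) ≃ X := (Fintype.equivFin X).symm with he
  set σ : Equiv.Perm (Fin (Fintype.card X)) := Tuple.sort (f ∘ e) with hσ
  haveI : Nonempty (Fin (Fintype.card X)) := Fin.pos_iff_nonempty.mp Fintype.card_pos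
  obtain ⟨w, hw⟩ := hS
  set J : Finset (Fin (Fintype.card X)) := Finset.univ.filter (fun j => e (σ j) ∈ S) with hJ
  have hJne : J.Nonempty := ⟨σ.symm (e.symm w), by simp [hJ, hw]⟩
  set i := J.min' hJne with hi
  have hiS : e (σ i) ∈ S := by
    have := J.min'_mem hJne; simpa [hJ] using this
  have hsub : S ⊆ {x | ∃ j, i ≤ j ∧ e (σ j) = x} := by
    intro x hx
    exact ⟨σ.symm (e.symm x), J.min'_le _ (by simpa [hJ] using hx), by simp⟩
  refine le_trans ?_ (Finset.le_sup' _ (Finset.mem_univ i))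
  exact min_le_min (hμmono _ _ hsub) (hc _ hiS)

/-- The Sugeno integral is attained: it equals `min (μ S) (f z)` for some nonempty `S`
containing `z` on which `f z` is the least value of `f`. -/
lemma sugeno_attained {X : Type*} [Fintype X] [Nonempty X] (μ : Set X → ℝ) (f : X → ℝ) :
    ∃ (S : Set X) (z : X), z ∈ S ∧ (∀ w ∈ S, f z ≤ f w) ∧ sugeno μ f = min (μ S) (f z) := by
  classical
  simp only [sugeno]
  set e : Fin (Fintype.card X) ≃ X := (Fintype.equivFin X).symm with he
  set σ : Equiv.Perm (Fin (Fintype.card X)) := Tuple.sort (f ∘ e) with hσ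
  haveI : Nonempty (Fin (Fintype.card X)) := Fin.pos_iff_nonempty.mp Fintype.card_pos
  obtain ⟨i, -, hival⟩ := Finset.exists_mem_eq_sup' (Finset.univ_nonempty)
    (fun i => min (μ {x | ∃ j, i ≤ j ∧ e (σ j) = x}) (f (e (σ i))))
  refine ⟨{x | ∃ j, i ≤ j ∧ e (σ j) = x}, e (σ i), ⟨i, le_refl i, rfl⟩, ?_, hival⟩
  rintro w ⟨j, hij, rfl⟩
  have := Tuple.monotone_sort (f ∘ e) hij
  simpa [hσ] using this

/-- the Sugeno upper approximation is a fixed point of the classical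
upper approximation. -/
theorem stmt11 {X : Type*} [Fintype X] [Nonempty X]
    (T : ℝ → ℝ → ℝ) (hT : IsTNorm T) (hTlc : LeftContinuousTNorm T)
    (μ : Set X → ℝ) (hμ : IsMonotoneMeasure μ)
    (R : X → X → ℝ) (hR : IsTEquiv T R)
    (A : X → ℝ) (hA : ∀ x, A x ∈ Set.Icc (0:ℝ) 1) :
    ∀ y : X,
      Finset.univ.sup' Finset.univ_nonempty
          (fun x => T (R x y) (sugeno μ (fun x' => T (R x' x) (A x'))))
        = sugeno μ (fun x' => T (R x' y) (A x')) := by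
  intro y
  have h01 : (1:ℝ) ∈ Set.Icc (0:ℝ) 1 := by norm_num
  have hμ01 : ∀ S : Set X, μ S ∈ Set.Icc (0:ℝ) 1 := by
    intro S
    constructor
    · rw [← hμ.empty]; exact hμ.mono _ _ (Set.empty_subset S)
    · rw [← hμ.univ]; exact hμ.mono _ _ (Set.subset_univ S)
  -- values of the fuzzy upper approximand are in [0,1]
  have hf01 : ∀ x z : X, T (R z x) (A z) ∈ Set.Icc (0:ℝ) 1 := fun x z =>
    hT.maps_to _ (hR.mem z x) _ (hA z)
  -- the Sugeno integral values are in [0,1]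
  have hU01 : ∀ x : X, sugeno μ (fun x' => T (R x' x) (A x')) ∈ Set.Icc (0:ℝ) 1 := by
    intro x
    obtain ⟨S, z, -, -, hval⟩ := sugeno_attained μ (fun x' => T (R x' x) (A x'))
    rw [hval]
    constructor
    · exact le_min (hμ01 S).1 (hf01 x z).1
    · exact min_le_of_right_le (hf01 x z).2
  -- T a b ≤ b for a, b ∈ [0,1]
  have hTle : ∀ a ∈ Set.Icc (0:ℝ) 1, ∀ b ∈ Set.Icc (0:ℝ) 1, T a b ≤ b := by
    intro a ha b hb
    calc T a b ≤ T 1 b := hT.mono a ha 1 h01 b hb b hb ha.2 le_rfl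
    _ = b := hT.one_left b hb
  apply le_antisymm
  · -- each T (R x y) (U x) ≤ U y
    apply Finset.sup'_le
    intro x _
    obtain ⟨S, z, hzS, hzmin, hval⟩ := sugeno_attained μ (fun x' => T (R x' x) (A x'))
    rw [hval]
    have hm : min (μ S) (T (R z x) (A z)) ∈ Set.Icc (0:ℝ) 1 := by
      constructor
      · exact le_min (hμ01 S).1 (hf01 x z).1
      · exact min_le_of_right_le (hf01 x z).2
    have key : T (R x y) (min (μ S) (T (R z x) (A z)))
        ≤ min (μ S) (T (R x y) (T (R z x) (A z))) := by
      refine le_min ?_ ?_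
      · exact le_trans (hTle _ (hR.mem x y) _ hm) (min_le_left _ _)
      · exact hT.mono _ (hR.mem x y) _ (hR.mem x y) _ hm _ (hf01 x z)
          le_rfl (min_le_right _ _)
    refine le_trans key (sugeno_ge_aux μ hμ.mono _ S ⟨z, hzS⟩ _ ?_)
    intro w hw
    -- T (R x y) (T (R z x) (A z)) ≤ T (R w y) (A w)
    have h1 : T (R x y) (T (R z x) (A z)) ≤ T (R x y) (T (R w x) (A w)) :=
      hT.mono _ (hR.mem x y) _ (hR.mem x y) _ (hf01 x z) _ (hf01 x w)
        le_rfl (hzmin w hw)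
    have h2 : T (R x y) (T (R w x) (A w)) = T (T (R x y) (R w x)) (A w) :=
      (hT.assoc _ (hR.mem x y) _ (hR.mem w x) _ (hA w)).symm
    have h3 : T (R x y) (R w x) ≤ R w y := by
      rw [hT.comm _ (hR.mem x y) _ (hR.mem w x)]
      exact hR.trans w x y
    have h4 : T (T (R x y) (R w x)) (A w) ≤ T (R w y) (A w) :=
      hT.mono _ (hT.maps_to _ (hR.mem x y) _ (hR.mem w x)) _ (hR.mem w y)
        _ (hA w) _ (hA w) h3 le_rfl
    calc T (R x y) (T (R z x) (A z)) ≤ T (R x y) (T (R w x) (A w)) := h1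
      _ = T (T (R x y) (R w x)) (A w) := h2
      _ ≤ T (R w y) (A w) := h4
  · -- take x = y: T (R y y) (U y) = U y
    have := Finset.le_sup' (f := fun x => T (R x y) (sugeno μ (fun x' => T (R x' x) (A x'))))
      (Finset.mem_univ y)
    calc sugeno μ (fun x' => T (R x' y) (A x'))
        = T 1 (sugeno μ (fun x' => T (R x' y) (A x'))) := (hT.one_left _ (hU01 y)).symm
      _ = T (R y y) (sugeno μ (fun x' => T (R x' y) (A x'))) := by rw [hR.refl y]
      _ ≤ _ := this
end

section
/- Let T be a left-continuous t-norm, I its residual implicator, and R a T-equivalence relation on a finite nonempty set X. A fuzzy set A on X is granularly representable w.r.t. R if and only if it is a fixed point of both classical approximations, i.e. min_{x∈X} I(R(x,y), A(x)) = A(y) and max_{x∈X} T(R(x,y), A(x)) = A(y) for every y ∈ X. -/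
set_option linter.unusedSectionVars false

namespace Stmt14Aux

lemma mem0 : (0:ℝ) ∈ Set.Icc (0:ℝ) 1 := by norm_num
lemma mem1 : (1:ℝ) ∈ Set.Icc (0:ℝ) 1 := by norm_num

lemma T_right_zero {T : ℝ → ℝ → ℝ} (hT : IsTNorm T) {x : ℝ} (hx : x ∈ Set.Icc (0:ℝ) 1) :
    T x 0 = 0 := by
  have hle : T x 0 ≤ T 1 0 := hT.mono x hx 1 mem1 0 mem0 0 mem0 hx.2 le_rfl
  have h10 : T 1 0 = 0 := hT.one_left 0 mem0
  have hge := (hT.maps_to x hx 0 mem0).1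
  linarith

lemma T_left_zero {T : ℝ → ℝ → ℝ} (hT : IsTNorm T) {x : ℝ} (hx : x ∈ Set.Icc (0:ℝ) 1) :
    T 0 x = 0 := by
  rw [hT.comm 0 mem0 x hx]; exact T_right_zero hT hx

lemma T_right_one {T : ℝ → ℝ → ℝ} (hT : IsTNorm T) {x : ℝ} (hx : x ∈ Set.Icc (0:ℝ) 1) :
    T x 1 = x := by
  rw [hT.comm x hx 1 mem1]; exact hT.one_left x hx

lemma residS_bdd (T : ℝ → ℝ → ℝ) (a y : ℝ) :
    BddAbove {l | l ∈ Set.Icc (0:ℝ) 1 ∧ T a l ≤ y} :=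
  ⟨1, fun l hl => hl.1.2⟩

lemma zero_mem_residS {T : ℝ → ℝ → ℝ} (hT : IsTNorm T) {a y : ℝ}
    (ha : a ∈ Set.Icc (0:ℝ) 1) (hy : 0 ≤ y) :
    (0:ℝ) ∈ {l | l ∈ Set.Icc (0:ℝ) 1 ∧ T a l ≤ y} :=
  ⟨mem0, by rw [T_right_zero hT ha]; exact hy⟩

lemma resid_mem {T : ℝ → ℝ → ℝ} (hT : IsTNorm T) {a y : ℝ}
    (ha : a ∈ Set.Icc (0:ℝ) 1) (hy : 0 ≤ y) :
    resid T a y ∈ Set.Icc (0:ℝ) 1 :=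
  ⟨le_csSup (residS_bdd T a y) (zero_mem_residS hT ha hy),
   csSup_le ⟨0, zero_mem_residS hT ha hy⟩ fun l hl => hl.1.2⟩

lemma le_resid {T : ℝ → ℝ → ℝ} {a y l : ℝ}
    (hl : l ∈ Set.Icc (0:ℝ) 1) (h : T a l ≤ y) : l ≤ resid T a y :=
  le_csSup (residS_bdd T a y) ⟨hl, h⟩

lemma T_resid_le {T : ℝ → ℝ → ℝ} (hT : IsTNorm T) (hTlc : LeftContinuousTNorm T)
    {a y : ℝ} (ha : a ∈ Set.Icc (0:ℝ) 1) (hy : 0 ≤ y) :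
    T a (resid T a y) ≤ y := by
  have hne : Set.Nonempty {l | l ∈ Set.Icc (0:ℝ) 1 ∧ T a l ≤ y} :=
    ⟨0, zero_mem_residS hT ha hy⟩
  have hsub : {l | l ∈ Set.Icc (0:ℝ) 1 ∧ T a l ≤ y} ⊆ Set.Icc (0:ℝ) 1 :=
    fun l hl => hl.1
  rw [resid, hTlc a ha _ hne hsub]
  exact csSup_le (hne.image _) (by rintro v ⟨l, hl, rfl⟩; exact hl.2)

lemma T_le_of_le_resid {T : ℝ → ℝ → ℝ} (hT : IsTNorm T) (hTlc : LeftContinuousTNorm T)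
    {a y l : ℝ} (ha : a ∈ Set.Icc (0:ℝ) 1) (hy : 0 ≤ y) (hl : l ∈ Set.Icc (0:ℝ) 1)
    (h : l ≤ resid T a y) : T a l ≤ y :=
  (hT.mono a ha a ha l hl _ (resid_mem hT ha hy) le_rfl h).trans (T_resid_le hT hTlc ha hy)

lemma resid_one {T : ℝ → ℝ → ℝ} (hT : IsTNorm T) {y : ℝ} (hy : y ∈ Set.Icc (0:ℝ) 1) :
    resid T 1 y = y := by
  refine le_antisymm (csSup_le ⟨0, zero_mem_residS hT mem1 hy.1⟩ fun l hl => ?_)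
    (le_csSup (residS_bdd T 1 y) ⟨hy, by rw [hT.one_left y hy]⟩)
  have := hl.2; rwa [hT.one_left l hl.1] at this

section Main

variable {X : Type*} [Fintype X] [Nonempty X]
  {T : ℝ → ℝ → ℝ} {R : X → X → ℝ} {A : X → ℝ}

lemma Sset_nonempty (hT : IsTNorm T) (hR : IsTEquiv T R) (hA : ∀ x, A x ∈ Set.Icc (0:ℝ) 1)
    (y : X) :
    Set.Nonempty {v | ∃ l ∈ Set.Icc (0:ℝ) 1, ∃ x, (∀ z, T l (R x z) ≤ A z) ∧ v = T l (R x y)} := by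
  refine ⟨T 0 (R (Classical.arbitrary X) y), 0, mem0, Classical.arbitrary X, fun z => ?_, rfl⟩
  rw [T_left_zero hT (hR.mem _ z)]; exact (hA z).1

lemma Sset_sub (hT : IsTNorm T) (hR : IsTEquiv T R) (y : X) :
    {v | ∃ l ∈ Set.Icc (0:ℝ) 1, ∃ x, (∀ z, T l (R x z) ≤ A z) ∧ v = T l (R x y)}
      ⊆ Set.Icc (0:ℝ) 1 := by
  rintro v ⟨l, hl, w, _, rfl⟩
  exact hT.maps_to l hl _ (hR.mem w y)

/-- Key lemma: if `A` is granularly representable then `T (R x y) (A x) ≤ A y`. -/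
lemma keyL (hT : IsTNorm T) (hTlc : LeftContinuousTNorm T) (hR : IsTEquiv T R)
    (hA : ∀ x, A x ∈ Set.Icc (0:ℝ) 1) (hGR : GranRep T R A) (x y : X) :
    T (R x y) (A x) ≤ A y := by
  rw [hGR x, hTlc (R x y) (hR.mem x y) _ (Sset_nonempty hT hR hA x) (Sset_sub hT hR x)]
  refine csSup_le ((Sset_nonempty hT hR hA x).image _) ?_
  rintro v ⟨v', ⟨l, hl, w, hc, rfl⟩, rfl⟩
  have ha : R x y ∈ Set.Icc (0:ℝ) 1 := hR.mem x y
  have hb : R w x ∈ Set.Icc (0:ℝ) 1 := hR.mem w x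
  have hTlb : T l (R w x) ∈ Set.Icc (0:ℝ) 1 := hT.maps_to l hl _ hb
  have hba : T (R w x) (R x y) ∈ Set.Icc (0:ℝ) 1 := hT.maps_to _ hb _ ha
  calc T (R x y) (T l (R w x)) = T (T l (R w x)) (R x y) := hT.comm _ ha _ hTlb
    _ = T l (T (R w x) (R x y)) := hT.assoc l hl _ hb _ ha
    _ ≤ T l (R w y) := hT.mono l hl l hl _ hba _ (hR.mem w y) le_rfl (hR.trans w x y)
    _ ≤ A y := hc y

theorem stmt14 (hT : IsTNorm T) (hTlc : LeftContinuousTNorm T) (hR : IsTEquiv T R)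
    (hA : ∀ x, A x ∈ Set.Icc (0:ℝ) 1) :
    GranRep T R A ↔
      ((∀ y, Finset.univ.inf' Finset.univ_nonempty (fun x => resid T (R x y) (A x)) = A y) ∧
       (∀ y, Finset.univ.sup' Finset.univ_nonempty (fun x => T (R x y) (A x)) = A y)) := by
  constructor
  · intro hGR
    constructor
    · intro y
      refine le_antisymm ?_ (Finset.le_inf' _ _ fun x _ => ?_)
      · refine (Finset.inf'_le _ (Finset.mem_univ y)).trans_eq ?_
        rw [hR.refl y, resid_one hT (hA y)]
      · refine le_resid (hA y) ?_
        have := keyL hT hTlc hR hA hGR y x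
        rwa [hR.symm y x] at this
    · intro y
      refine le_antisymm (Finset.sup'_le _ _ fun x _ => keyL hT hTlc hR hA hGR x y) ?_
      refine (Finset.le_sup' (fun x => T (R x y) (A x)) (Finset.mem_univ y)).trans_eq' ?_
      rw [hR.refl y, hT.one_left _ (hA y)]
  · rintro ⟨hl, -⟩ y
    have hcont : ∀ z, T (A y) (R y z) ≤ A z := by
      intro z
      have h1 : A y ≤ resid T (R z y) (A z) :=
        (hl y).symm.trans_le (Finset.inf'_le _ (Finset.mem_univ z))
      have h2 : T (R z y) (A y) ≤ A z :=
        T_le_of_le_resid hT hTlc (hR.mem z y) (hA z).1 (hA y) h1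
      rw [hT.comm (A y) (hA y) (R y z) (hR.mem y z), hR.symm y z]
      exact h2
    have hmem : A y ∈ {v | ∃ l ∈ Set.Icc (0:ℝ) 1, ∃ x, (∀ z, T l (R x z) ≤ A z) ∧ v = T l (R x y)} := by
      refine ⟨A y, hA y, y, hcont, ?_⟩
      rw [hR.refl y, T_right_one hT (hA y)]
    refine le_antisymm (le_csSup ⟨1, fun v hv => (Sset_sub hT hR y hv).2⟩ hmem) ?_
    refine csSup_le ⟨A y, hmem⟩ ?_
    rintro v ⟨l, hl', w, hc, rfl⟩
    exact hc y

end Main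
end Stmt14Aux

/-- `A` is granularly representable iff it is a fixed point of both the
classical lower and upper approximations. -/
theorem stmt14 {X : Type*} [Fintype X] [Nonempty X]
    (T : ℝ → ℝ → ℝ) (hT : IsTNorm T) (hTlc : LeftContinuousTNorm T)
    (R : X → X → ℝ) (hR : IsTEquiv T R)
    (A : X → ℝ) (hA : ∀ x, A x ∈ Set.Icc (0:ℝ) 1) :
    GranRep T R A ↔
      ((∀ y, Finset.univ.inf' Finset.univ_nonempty (fun x => resid T (R x y) (A x)) = A y) ∧
       (∀ y, Finset.univ.sup' Finset.univ_nonempty (fun x => T (R x y) (A x)) = A y)) :=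
  Stmt14Aux.stmt14 hT hTlc hR hA
end

section
/- Let T be a left-continuous t-norm and R a T-equivalence relation on a finite nonempty set X. A fuzzy set A on X is granularly representable w.r.t. R if and only if it satisfies the consistency property: T(R(x,y), A(y)) ≤ A(x) for all x, y ∈ X. -/
/-- `A` is granularly representable iff it satisfies the consistency property. -/
theorem stmt15 {X : Type*} [Fintype X] [Nonempty X]
    (T : ℝ → ℝ → ℝ) (hT : IsTNorm T) (hTlc : LeftContinuousTNorm T)
    (R : X → X → ℝ) (hR : IsTEquiv T R)
    (A : X → ℝ) (hA : ∀ x, A x ∈ Set.Icc (0:ℝ) 1) :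
    GranRep T R A ↔ (∀ x y, T (R x y) (A y) ≤ A x) := by
  have h0 : (0:ℝ) ∈ Set.Icc (0:ℝ) 1 := by constructor <;> norm_num
  have h1 : (1:ℝ) ∈ Set.Icc (0:ℝ) 1 := by constructor <;> norm_num
  -- values named
  set S : X → Set ℝ := fun y =>
    {v | ∃ l ∈ Set.Icc (0:ℝ) 1, ∃ x, (∀ z, T l (R x z) ≤ A z) ∧ v = T l (R x y)} with hS
  have hSsub : ∀ y, S y ⊆ Set.Icc (0:ℝ) 1 := by
    rintro y v ⟨l, hl, x, _, rfl⟩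
    exact hT.maps_to l hl _ (hR.mem x y)
  have hT0 : ∀ r ∈ Set.Icc (0:ℝ) 1, T 0 r = 0 := by
    intro r hr
    have h1' := hT.mono 0 h0 0 h0 r hr 1 h1 le_rfl hr.2
    have h2' : T 0 1 = 0 := by rw [hT.comm 0 h0 1 h1, hT.one_left 0 h0]
    have h3' := (hT.maps_to 0 h0 r hr).1
    linarith
  have hSne : ∀ y, (S y).Nonempty := by
    intro y
    obtain ⟨x0⟩ := ‹Nonempty X›
    exact ⟨T 0 (R x0 y), 0, h0, x0, fun z => by
      rw [hT0 _ (hR.mem x0 z)]; exact (hA z).1, rfl⟩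
  have hTright : ∀ r ∈ Set.Icc (0:ℝ) 1, T r 1 = r := by
    intro r hr; rw [hT.comm r hr 1 h1, hT.one_left r hr]
  constructor
  · -- GranRep → consistency
    intro hG x y
    have hLC := hTlc (R x y) (hR.mem x y) (S y) (hSne y) (hSsub y)
    rw [hG y, hLC]
    apply Real.sSup_le
    · rintro w ⟨v, hv, rfl⟩
      obtain ⟨l, hl, z, hgran, rfl⟩ := hv
      -- T (R x y) (T l (R z y)) ≤ A x
      have ha := hR.mem x y
      have hb := hR.mem z y
      have hTlb := hT.maps_to l hl _ hb
      have e1 : T (R x y) (T l (R z y)) = T l (T (R z y) (R x y)) := by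
        rw [← hT.assoc (R x y) ha l hl (R z y) hb,
            hT.comm (R x y) ha l hl,
            hT.assoc l hl (R x y) ha (R z y) hb,
            hT.comm (R x y) ha (R z y) hb]
      have e2 : T (R z y) (R x y) ≤ R z x := by
        rw [hR.symm x y]; exact hR.trans z y x
      have hTba := hT.maps_to (R z y) hb (R x y) ha
      have e3 : T l (T (R z y) (R x y)) ≤ T l (R z x) :=
        hT.mono l hl l hl _ hTba _ (hR.mem z x) le_rfl e2
      rw [e1]
      exact e3.trans (hgran x)
    · exact (hA x).1
  · -- consistency → GranRep
    intro hc y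
    apply le_antisymm
    · apply le_csSup ⟨1, fun v hv => (hSsub y hv).2⟩
      refine ⟨A y, hA y, y, fun z => ?_, ?_⟩
      · rw [hT.comm (A y) (hA y) (R y z) (hR.mem y z), ← hR.symm z y]
        exact hc z y
      · rw [hR.refl y, hTright (A y) (hA y)]
    · apply Real.sSup_le
      · rintro v ⟨l, hl, x, hgran, rfl⟩
        exact hgran y
      · exact (hA y).1
end

section
/- (Non-granularity of the WOWAC lower approximation.) Let X = {x₁, x₂, x₃}, let R be the fuzzy relation on X given by the symmetric matrix R(x₁,x₂) = R(x₂,x₃) = 0.5, R(x₁,x₃) = 1, R(xᵢ,xᵢ) = 1 (which is a T_L-equivalence relation), and let A = (0, 1, 0). Define the WOWAC lower approximation of A with identity RIM quantifier by L(y) = (Σ_{x∈X} I_L(R(x,y), A(x))·R(x,y)) / (Σ_{x∈X} R(x,y)). Then L = (0.2, 0.75, 0.2), while min_{x∈X} I_L(R(x,x₂), L(x)) = 0.7 ≠ 0.75 = L(x₂); hence L is not a fixed point of the classical lower approximation and in particular L is not granularly representable w.r.t. R. -/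
/-- The Łukasiewicz t-norm. -/
noncomputable def TL (x y : ℝ) : ℝ := max 0 (x + y - 1)

/-- The Łukasiewicz (residual) implicator. -/
noncomputable def IL (x y : ℝ) : ℝ := min 1 (1 - x + y)

/-- the WOWAC lower approximation (identity RIM quantifier) of
`A = (0,1,0)` w.r.t. the given `T_L`-equivalence relation on a 3-element set equals
`(0.2, 0.75, 0.2)` and is neither a fixed point of the classical lower approximation
nor granularly representable. -/
theorem stmt16 :
    let R : Fin 3 → Fin 3 → ℝ := ![![1, 1/2, 1], ![1/2, 1, 1/2], ![1, 1/2, 1]]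
    let A : Fin 3 → ℝ := ![0, 1, 0]
    let L : Fin 3 → ℝ := fun y => (∑ x, IL (R x y) (A x) * R x y) / (∑ x, R x y)
    IsTEquiv TL R ∧
    L = ![1/5, 3/4, 1/5] ∧
    Finset.univ.inf' Finset.univ_nonempty (fun x => IL (R x 1) (L x)) = 7/10 ∧
    L 1 = 3/4 ∧
    Finset.univ.inf' Finset.univ_nonempty (fun x => IL (R x 1) (L x)) ≠ L 1 ∧
    ¬ GranRep TL R L := by
  intro R A L
  have hL : L = ![1/5, 3/4, 1/5] := by
    funext y
    fin_cases y <;>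
      norm_num [L, R, A, IL, TL, Fin.sum_univ_three, Matrix.cons_val_two, Matrix.tail_cons, Matrix.head_cons]
  have hinf : Finset.univ.inf' Finset.univ_nonempty (fun x => IL (R x 1) (L x)) = 7/10 := by
    apply le_antisymm
    · refine le_trans (Finset.inf'_le _ (Finset.mem_univ 0)) ?_
      norm_num [IL, R, hL]
    · apply Finset.le_inf'
      intro x _
      fin_cases x <;> norm_num [IL, R, hL]
  have hL1 : L 1 = 3/4 := by rw [hL]; norm_num
  refine ⟨?_, hL, hinf, hL1, by rw [hinf, hL1]; norm_num, ?_⟩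
  · constructor
    · intro x y; fin_cases x <;> fin_cases y <;> norm_num [R]
    · intro x; fin_cases x <;> norm_num [R]
    · intro x y; fin_cases x <;> fin_cases y <;> norm_num [R]
    · intro x y z; fin_cases x <;> fin_cases y <;> fin_cases z <;> norm_num [R, TL]
  · intro hG
    have h := hG 1
    rw [hL1] at h
    have hs : sSup {v | ∃ l ∈ Set.Icc (0:ℝ) 1, ∃ x, (∀ z, TL l (R x z) ≤ L z) ∧ v = TL l (R x 1)}
        ≤ 7/10 := by
      apply Real.sSup_le
      · rintro v ⟨l, hl, x, hx, rfl⟩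
        fin_cases x
        · have h0 := hx 0
          rw [hL] at h0
          simp only [TL, R] at h0 ⊢
          norm_num at h0 ⊢
          linarith
        · have h0 := hx 0
          rw [hL] at h0
          simp only [TL, R] at h0 ⊢
          norm_num at h0 ⊢
          linarith
        · have h0 := hx 0
          rw [hL] at h0
          simp only [TL, R] at h0 ⊢
          norm_num at h0 ⊢
          linarith
      · norm_num
    linarith [h, hs]
end
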